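/- arXiv:0911.0786 — 6 statements merged into one kernel-verified Lean document; each statement's English description precedes it below -/
import Mathlib

section
/- There exists a constant k₀ > 0 (depending only on the constant c in hypothesis (w)) such that for every a, b ∈ ℝ with a < b and every u ∈ W^{2,2}(a,b), one has k₀ ∫_a^b (u')² dx ≤ (b−a)^{−2} ∫_a^b W(u) dx + (b−a)² ∫_a^b (u'')² dx. -/
open MeasureTheory intervalIntegral


lemma int_Icc_eq {f : ℝ → ℝ} {a b : ℝ} (h : a ≤ b) :
    (∫ x in a..b, f x) = ∫ x in Set.Icc a b, f x := by
  rw [intervalIntegral.integral_of_le h, MeasureTheory.integral_Icc_eq_integral_Ioc]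

lemma sq_int_abs_le {f : ℝ → ℝ} {a b : ℝ} (hab : a ≤ b)
    (h1 : IntegrableOn f (Set.Icc a b))
    (h2 : IntegrableOn (fun x => (f x) ^ 2) (Set.Icc a b)) :
    (∫ x in Set.Icc a b, |f x|) ^ 2 ≤ (b - a) * ∫ x in Set.Icc a b, (f x) ^ 2 := by
  set I := ∫ x in Set.Icc a b, |f x| with hI
  set S := ∫ x in Set.Icc a b, (f x) ^ 2 with hS
  have hI0 : 0 ≤ I := MeasureTheory.setIntegral_nonneg measurableSet_Icc
    (fun x _ => abs_nonneg _)
  have hsq0 : 0 ≤ S := MeasureTheory.setIntegral_nonneg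
    measurableSet_Icc (fun x _ => sq_nonneg _)
  rcases eq_or_lt_of_le hI0 with h0 | hIpos
  · rw [← h0]; simpa using mul_nonneg (by linarith : (0:ℝ) ≤ b - a) hsq0
  have hba : a < b := by
    rcases lt_or_eq_of_le hab with h | h
    · exact h
    · exfalso
      have : I = 0 := by
        rw [hI, ← h, Set.Icc_self]
        have hz : (volume : Measure ℝ).restrict {a} = 0 := by
          simp [Measure.restrict_eq_zero]
        rw [hz, MeasureTheory.integral_zero_measure]
      linarith
  set t := I / (b - a) with ht
  have hba' : (0:ℝ) < b - a := by linarith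
  have htpos : 0 < t := div_pos hIpos hba'
  have h2t : (0:ℝ) < 2 * t := by positivity
  have hpt : ∀ x ∈ Set.Icc a b, |f x| ≤ t / 2 + (f x)^2 / (2 * t) := by
    intro x _
    have key : |f x| * (2*t) ≤ t*t + (f x) ^ 2 := by
      nlinarith [sq_abs (f x), sq_nonneg (|f x| - t)]
    calc |f x| = |f x| * (2*t) / (2*t) := by field_simp
      _ ≤ (t*t + (f x)^2) / (2*t) := by exact div_le_div_of_nonneg_right key h2t.le |>.trans_eq rfl
      _ = t/2 + (f x)^2/(2*t) := by field_simp
  have hconst : IntegrableOn (fun _ : ℝ => t / 2) (Set.Icc a b) :=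
    integrableOn_const measure_Icc_lt_top.ne
  have hint : IntegrableOn (fun x => t / 2 + (f x)^2 / (2 * t)) (Set.Icc a b) :=
    hconst.add (h2.div_const _)
  have hmono : I ≤ ∫ x in Set.Icc a b, (t / 2 + (f x)^2 / (2 * t)) :=
    MeasureTheory.setIntegral_mono_on h1.abs hint measurableSet_Icc hpt
  have hsum : ∫ x in Set.Icc a b, (t / 2 + (f x)^2 / (2 * t))
      = (b - a) * (t / 2) + S / (2 * t) := by
    rw [MeasureTheory.integral_add hconst (h2.div_const _),
      MeasureTheory.setIntegral_const, MeasureTheory.integral_div, smul_eq_mul,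
      Real.volume_real_Icc_of_le hab]
  have e1 : (b - a) * (t / 2) = I / 2 := by rw [ht]; field_simp
  rw [hsum, e1] at hmono
  have h3 : I / 2 ≤ S / (2 * t) := by linarith
  have h4 : I / 2 * (2 * t) ≤ S := (le_div_iff₀ h2t).mp h3
  have e2 : I / 2 * (2 * t) = I ^ 2 / (b - a) := by rw [ht]; field_simp
  rw [e2] at h4
  linarith [(div_le_iff₀ hba').mp h4]


lemma vol_le_of_diam {S : Set ℝ} {a b d : ℝ} (hsub : S ⊆ Set.Icc a b) (hd : 0 ≤ d)
    (h : ∀ x ∈ S, ∀ y ∈ S, |x - y| ≤ d) : volume S ≤ ENNReal.ofReal d := by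
  rcases S.eq_empty_or_nonempty with h0 | hne
  · simp [h0]
  have hbb : BddBelow S := (bddBelow_Icc : BddBelow (Set.Icc a b)).mono hsub
  have hba : BddAbove S := (bddAbove_Icc : BddAbove (Set.Icc a b)).mono hsub
  have hsub2 : S ⊆ Set.Icc (sInf S) (sSup S) := subset_Icc_csInf_csSup hbb hba
  have hdiam : sSup S ≤ sInf S + d := by
    apply csSup_le hne
    intro y hy
    have hle : y - d ≤ sInf S := by
      apply le_csInf hne
      intro x hx
      have := abs_le.mp (h y hy x hx)
      linarith [this.2]
    linarith
  calc volume S ≤ volume (Set.Icc (sInf S) (sSup S)) := measure_mono hsub2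
    _ = ENNReal.ofReal (sSup S - sInf S) := by rw [Real.volume_Icc]
    _ ≤ ENNReal.ofReal d := ENNReal.ofReal_le_ofReal (by linarith)

lemma const_sign {g : ℝ → ℝ} {a b m : ℝ} (hg : ContinuousOn g (Set.Icc a b))
    (hm : 0 < m) (h : ∀ x ∈ Set.Icc a b, m ≤ |g x|) :
    (∀ x ∈ Set.Icc a b, m ≤ g x) ∨ (∀ x ∈ Set.Icc a b, g x ≤ -m) := by
  have hx : ∀ x ∈ Set.Icc a b, m ≤ g x ∨ g x ≤ -m := by
    intro x hx
    rcases le_abs.mp (h x hx) with h1 | h1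
    · exact Or.inl h1
    · exact Or.inr (by linarith)
  by_contra hcon
  push_neg at hcon
  obtain ⟨⟨x₁, hx₁, hgx₁⟩, ⟨x₂, hx₂, hgx₂⟩⟩ := hcon
  have h1 : g x₁ ≤ -m := (hx x₁ hx₁).resolve_left (by linarith)
  have h2 : m ≤ g x₂ := (hx x₂ hx₂).resolve_right (by linarith)
  have hsub : Set.uIcc x₁ x₂ ⊆ Set.Icc a b :=
    (Set.ordConnected_Icc).uIcc_subset hx₁ hx₂
  have hivt := intermediate_value_uIcc (hg.mono hsub)
  have h0 : (0:ℝ) ∈ Set.uIcc (g x₁) (g x₂) := by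
    rw [Set.mem_uIcc]
    left; constructor <;> linarith
  obtain ⟨z, hz, hgz⟩ := hivt h0
  have := h z (hsub hz)
  rw [hgz] at this
  simp at this
  linarith


lemma ftc_ge {u g : ℝ → ℝ} {a b m : ℝ}
    (hder : ∀ x ∈ Set.Icc a b, HasDerivWithinAt u (g x) (Set.Icc a b) x)
    (hgc : ContinuousOn g (Set.Icc a b))
    (hm : ∀ x ∈ Set.Icc a b, m ≤ g x) :
    ∀ x ∈ Set.Icc a b, ∀ y ∈ Set.Icc a b, x ≤ y → m * (y - x) ≤ u y - u x := by
  intro x hx y hy hxy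
  have hsubI : Set.Icc x y ⊆ Set.Icc a b := Set.Icc_subset_Icc hx.1 hy.2
  have hgi : IntervalIntegrable g volume x y := by
    apply ContinuousOn.intervalIntegrable
    rw [Set.uIcc_of_le hxy]
    exact hgc.mono hsubI
  have heq : ∫ t in x..y, g t = u y - u x := by
    apply intervalIntegral.integral_eq_sub_of_hasDeriv_right_of_le hxy
    · exact fun z hz => ((hder z (hsubI hz)).continuousWithinAt).mono hsubI
    · intro t ht
      have htab : t ∈ Set.Ioo a b := ⟨lt_of_le_of_lt hx.1 ht.1, lt_of_lt_of_le ht.2 hy.2⟩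
      exact ((hder t (Set.mem_Icc_of_Ioo htab)).hasDerivAt
        (Icc_mem_nhds htab.1 htab.2)).hasDerivWithinAt
    · exact hgi
  rw [← heq]
  calc m * (y - x) = ∫ _ in x..y, m := by
        rw [intervalIntegral.integral_const, smul_eq_mul]; ring
    _ ≤ ∫ t in x..y, g t := intervalIntegral.integral_mono_on hxy
        intervalIntegrable_const hgi (fun t ht => hm t (hsubI ht))

theorem test (c : ℝ) (hc : 0 < c)
    (W : ℝ → ℝ) (hWc : Continuous W) (hWnn : ∀ s, 0 ≤ W s)
    (hWp : ∀ s, 0 ≤ s → c * (s - 1) ^ 2 ≤ W s)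
    (hWm : ∀ s, s ≤ 0 → c * (s + 1) ^ 2 ≤ W s)
    (a b : ℝ) (hab : a < b) (u u' u'' : ℝ → ℝ)
    (hder : ∀ x ∈ Set.Icc a b, HasDerivWithinAt u (u' x) (Set.Icc a b) x)
    (hu'c : ContinuousOn u' (Set.Icc a b))
    (hi1 : MeasureTheory.IntegrableOn u'' (Set.Icc a b))
    (hi2 : MeasureTheory.IntegrableOn (fun x => (u'' x) ^ 2) (Set.Icc a b))
    (hfund : ∀ x ∈ Set.Icc a b, u' x = u' a + ∫ t in a..x, u'' t) :
    min (1/16 : ℝ) (9*c/2048) * ∫ x in a..b, (u' x) ^ 2 ≤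
      ((b - a) ^ 2)⁻¹ * (∫ x in a..b, W (u x)) +
        (b - a) ^ 2 * ∫ x in a..b, (u'' x) ^ 2 := by
  have hab' : a ≤ b := hab.le
  set L : ℝ := b - a with hLdef
  have hL0 : 0 < L := by simp only [hLdef]; linarith
  have huc : ContinuousOn u (Set.Icc a b) := fun x hx => (hder x hx).continuousWithinAt
  rw [int_Icc_eq hab', int_Icc_eq hab', int_Icc_eq hab']
  set A := ∫ x in Set.Icc a b, (u' x) ^ 2 with hAdef
  set B := ∫ x in Set.Icc a b, W (u x) with hBdef
  set C2 := ∫ x in Set.Icc a b, (u'' x) ^ 2 with hC2def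
  have hA0 : 0 ≤ A := MeasureTheory.setIntegral_nonneg measurableSet_Icc fun x _ => sq_nonneg _
  have hB0 : 0 ≤ B := MeasureTheory.setIntegral_nonneg measurableSet_Icc fun x _ => hWnn _
  have hC0 : 0 ≤ C2 := MeasureTheory.setIntegral_nonneg measurableSet_Icc fun x _ => sq_nonneg _
  set I := ∫ x in Set.Icc a b, |u'' x| with hIdef
  have hI0 : 0 ≤ I := MeasureTheory.setIntegral_nonneg measurableSet_Icc fun x _ => abs_nonneg _
  have hCS : I ^ 2 ≤ L * C2 := sq_int_abs_le hab' hi1 hi2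
  -- maximum of |u'|
  obtain ⟨xm, hxm, hmaxon⟩ := isCompact_Icc.exists_isMaxOn (Set.nonempty_Icc.2 hab')
    (continuous_abs.comp_continuousOn hu'c)
  set M := |u' xm| with hMdef
  have hM0 : 0 ≤ M := abs_nonneg _
  have hmax : ∀ y ∈ Set.Icc a b, |u' y| ≤ M := fun y hy => hmaxon hy
  -- A ≤ L * M^2
  have hA_le : A ≤ L * M ^ 2 := by
    have h1 : A ≤ ∫ _ in Set.Icc a b, M ^ 2 := by
      apply MeasureTheory.setIntegral_mono_on
        ((hu'c.pow 2).integrableOn_Icc)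
        (integrableOn_const measure_Icc_lt_top.ne) measurableSet_Icc
      intro x hx
      calc (u' x) ^ 2 = |u' x| ^ 2 := (sq_abs _).symm
        _ ≤ M ^ 2 := pow_le_pow_left₀ (abs_nonneg _) (hmax x hx) 2
    rwa [MeasureTheory.setIntegral_const, Real.volume_real_Icc_of_le hab', smul_eq_mul] at h1
  -- difference bound on u'
  have hdiff : ∀ x ∈ Set.Icc a b, ∀ y ∈ Set.Icc a b, |u' x - u' y| ≤ I := by
    intro x hx y hy
    have hii : ∀ z ∈ Set.Icc a b, IntervalIntegrable u'' volume a z := by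
      intro z hz
      rw [intervalIntegrable_iff, Set.uIoc_of_le hz.1]
      exact hi1.mono_set ((Set.Ioc_subset_Icc_self).trans (Set.Icc_subset_Icc_right hz.2))
    have heq : u' x - u' y = ∫ t in y..x, u'' t := by
      rw [hfund x hx, hfund y hy]
      rw [add_sub_add_left_eq_sub]
      exact intervalIntegral.integral_interval_sub_left (hii x hx) (hii y hy)
    rw [heq]
    calc |∫ t in y..x, u'' t| ≤ ∫ t in Set.uIoc y x, |u'' t| := by
          simpa [Real.norm_eq_abs] using
            intervalIntegral.norm_integral_le_integral_norm_uIoc (a := y) (b := x) (f := u'')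
      _ ≤ I := by
          apply MeasureTheory.setIntegral_mono_set hi1.abs
          · exact Filter.Eventually.of_forall fun t => abs_nonneg _
          · apply HasSubset.Subset.eventuallyLE
            rcases le_total y x with h | h
            · rw [Set.uIoc_of_le h]
              exact (Set.Ioc_subset_Icc_self).trans (Set.Icc_subset_Icc hy.1 hx.2)
            · rw [Set.uIoc_of_ge h]
              exact (Set.Ioc_subset_Icc_self).trans (Set.Icc_subset_Icc hx.1 hy.2)
  rcases le_or_gt M (4 * I) with hcase | hcase
  · -- Case 1 : M ≤ 4 I
    have hM2 : M ^ 2 ≤ 16 * I ^ 2 := by nlinarith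
    have h16L : (0:ℝ) ≤ 16 * L := by positivity
    have e1 : L * M ^ 2 ≤ L * (16 * I ^ 2) := mul_le_mul_of_nonneg_left hM2 hL0.le
    have e2 : 16 * L * I ^ 2 ≤ 16 * L * (L * C2) := mul_le_mul_of_nonneg_left hCS h16L
    have hA16 : A ≤ 16 * L ^ 2 * C2 := by nlinarith
    have h1 : min (1/16 : ℝ) (9*c/2048) * A ≤ (1/16) * A :=
      mul_le_mul_of_nonneg_right (min_le_left _ _) hA0
    have h3 : 0 ≤ (L ^ 2)⁻¹ * B := by positivity
    calc min (1/16 : ℝ) (9*c/2048) * A ≤ (1/16) * A := h1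
      _ ≤ (1/16) * (16 * L ^ 2 * C2) := mul_le_mul_of_nonneg_left hA16 (by norm_num)
      _ = L ^ 2 * C2 := by ring
      _ ≤ (L ^ 2)⁻¹ * B + L ^ 2 * C2 := le_add_of_nonneg_left h3
  · -- Case 2 : M > 4 I
    have hM : 0 < M := lt_of_le_of_lt (by linarith) hcase
    have h34 : ∀ x ∈ Set.Icc a b, 3 * M / 4 ≤ |u' x| := by
      intro x hx
      have h1 := hdiff xm hxm x hx
      have h2 : M - |u' x| ≤ |u' xm - u' x| := by
        have := abs_sub_abs_le_abs_sub (u' xm) (u' x)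
        linarith
      linarith
    have hgrow : ∀ x ∈ Set.Icc a b, ∀ y ∈ Set.Icc a b, x ≤ y →
        3 * M / 4 * (y - x) ≤ |u y - u x| := by
      rcases const_sign hu'c (by linarith : (0:ℝ) < 3 * M / 4) h34 with hpos | hneg
      · intro x hx y hy hxy
        have := ftc_ge hder hu'c hpos x hx y hy hxy
        calc 3 * M / 4 * (y - x) ≤ u y - u x := this
          _ ≤ |u y - u x| := le_abs_self _
      · intro x hx y hy hxy
        have hderneg : ∀ z ∈ Set.Icc a b, HasDerivWithinAt (fun w => -u w) (-u' z) (Set.Icc a b) z :=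
          fun z hz => (hder z hz).neg
        have := ftc_ge (m := 3 * M / 4) hderneg hu'c.neg
          (fun z hz => by simpa using by linarith [hneg z hz] : ∀ z ∈ Set.Icc a b, 3 * M / 4 ≤ -u' z)
          x hx y hy hxy
        calc 3 * M / 4 * (y - x) ≤ -u y - -u x := this
          _ = -(u y - u x) := by ring
          _ ≤ |u y - u x| := neg_le_abs _
    set r : ℝ := 3 * M * L / 32 with hrdef
    have hr0 : 0 < r := by positivity
    have key : ∀ w : ℝ, volume {x | x ∈ Set.Icc a b ∧ |u x - w| ≤ r} ≤ ENNReal.ofReal (L/4) := by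
      intro w
      apply vol_le_of_diam (a := a) (b := b) (fun x hx => hx.1) (by linarith)
      intro x hx y hy
      obtain ⟨hxI, hxr⟩ := hx
      obtain ⟨hyI, hyr⟩ := hy
      have h1 : 3 * M / 4 * |x - y| ≤ |u x - u y| := by
        rcases le_total x y with h | h
        · rw [abs_sub_comm x y, abs_of_nonneg (by linarith : (0:ℝ) ≤ y - x),
            abs_sub_comm (u x) (u y)]
          exact hgrow x hxI y hyI h
        · rw [abs_of_nonneg (by linarith : (0:ℝ) ≤ x - y)]
          exact hgrow y hyI x hxI h
      have h2 : |u x - u y| ≤ 2 * r := by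
        have := abs_sub_le (u x) w (u y)
        have e : |w - u y| = |u y - w| := abs_sub_comm _ _
        linarith
      have h3 : 3 * M / 4 * |x - y| ≤ 2 * r := le_trans h1 h2
      rw [hrdef] at h3
      nlinarith [abs_nonneg (x - y)]
    have keyclosed : ∀ w : ℝ, IsClosed {x | x ∈ Set.Icc a b ∧ |u x - w| ≤ r} := by
      intro w
      have : {x | x ∈ Set.Icc a b ∧ |u x - w| ≤ r}
          = Set.Icc a b ∩ (fun x => |u x - w|) ⁻¹' Set.Iic r := by
        ext x; simp [Set.mem_setOf_eq, Set.mem_preimage]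
      rw [this]
      exact ContinuousOn.preimage_isClosed_of_isClosed
        ((huc.sub continuousOn_const).abs) isClosed_Icc isClosed_Iic
    set S1 : Set ℝ := {x | x ∈ Set.Icc a b ∧ |u x - 1| ≤ r} with hS1def
    set S2 : Set ℝ := {x | x ∈ Set.Icc a b ∧ |u x - (-1)| ≤ r} with hS2def
    set bad : Set ℝ := S1 ∪ S2 with hbaddef
    set good : Set ℝ := Set.Icc a b \ bad with hgooddef
    have hgoodm : MeasurableSet good :=
      measurableSet_Icc.diff (((keyclosed 1).measurableSet).union ((keyclosed (-1)).measurableSet))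
    have hvolbad : volume bad ≤ ENNReal.ofReal (L/2) := by
      calc volume bad ≤ volume S1 + volume S2 := measure_union_le _ _
        _ ≤ ENNReal.ofReal (L/4) + ENNReal.ofReal (L/4) := add_le_add (key 1) (key (-1))
        _ = ENNReal.ofReal (L/2) := by
            rw [← ENNReal.ofReal_add (by linarith) (by linarith)]; congr 1; ring
    have hgoodfin : volume good ≠ ⊤ :=
      ne_of_lt (lt_of_le_of_lt (measure_mono Set.diff_subset) measure_Icc_lt_top)
    have hgoodvol : ENNReal.ofReal (L/2) ≤ volume good := by
      have hsplit : volume (Set.Icc a b) ≤ volume good + volume bad := by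
        refine le_trans (measure_mono ?_) (measure_union_le _ _)
        intro x hx
        by_cases hxb : x ∈ bad
        · exact Or.inr hxb
        · exact Or.inl ⟨hx, hxb⟩
      have h1 : ENNReal.ofReal L ≤ volume good + ENNReal.ofReal (L/2) := by
        exact le_trans (le_of_eq (by rw [Real.volume_Icc])) (le_trans hsplit (add_le_add le_rfl hvolbad))
      have h2 : ENNReal.ofReal L - ENNReal.ofReal (L/2) ≤ volume good :=
        tsub_le_iff_right.mpr h1
      rw [← ENNReal.ofReal_sub _ (by linarith)] at h2
      have e : L - L/2 = L/2 := by ring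
      rwa [e] at h2
    have hgoodreal : L/2 ≤ (volume good).toReal := by
      have := ENNReal.toReal_mono hgoodfin hgoodvol
      rwa [ENNReal.toReal_ofReal (by linarith)] at this
    set D : ℝ → ℝ := fun x => min ((u x - 1)^2) ((u x + 1)^2) with hDdef
    have hDcont : ContinuousOn D (Set.Icc a b) := by
      apply ContinuousOn.inf
      · exact (huc.sub continuousOn_const).pow 2
      · exact (huc.add continuousOn_const).pow 2
    have hDint : IntegrableOn D (Set.Icc a b) := hDcont.integrableOn_Icc
    have hD0 : ∀ x, 0 ≤ D x := fun x => le_min (sq_nonneg _) (sq_nonneg _)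
    have hDlow : ∀ x ∈ good, r^2 ≤ D x := by
      intro x hx
      obtain ⟨hxI, hxbad⟩ := hx
      have h1 : r ≤ |u x - 1| := by
        by_contra h
        push_neg at h
        exact hxbad (Or.inl ⟨hxI, h.le⟩)
      have h2 : r ≤ |u x + 1| := by
        by_contra h
        push_neg at h
        refine hxbad (Or.inr ⟨hxI, ?_⟩)
        rw [sub_neg_eq_add]
        exact h.le
      apply le_min
      · calc r^2 ≤ |u x - 1|^2 := pow_le_pow_left₀ hr0.le h1 2
          _ = (u x - 1)^2 := sq_abs _
      · calc r^2 ≤ |u x + 1|^2 := pow_le_pow_left₀ hr0.le h2 2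
          _ = (u x + 1)^2 := sq_abs _
    have hgoodconst : IntegrableOn (fun _ : ℝ => r^2) good :=
      integrableOn_const (lt_of_le_of_lt (measure_mono Set.diff_subset) measure_Icc_lt_top).ne
    have hint_good : r^2 * (L/2) ≤ ∫ x in good, D x := by
      have hmono := MeasureTheory.setIntegral_mono_on hgoodconst
        (hDint.mono_set Set.diff_subset) hgoodm hDlow
      calc r^2 * (L/2) ≤ r^2 * (volume good).toReal :=
            mul_le_mul_of_nonneg_left hgoodreal (sq_nonneg r)
        _ = (volume good).toReal * r^2 := mul_comm _ _
        _ = ∫ _ in good, (r^2 : ℝ) := by rw [MeasureTheory.setIntegral_const, smul_eq_mul]; rfl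
        _ ≤ ∫ x in good, D x := hmono
    have hDIcc : ∫ x in good, D x ≤ ∫ x in Set.Icc a b, D x :=
      MeasureTheory.setIntegral_mono_set hDint
        (Filter.Eventually.of_forall fun x => hD0 x)
        (HasSubset.Subset.eventuallyLE Set.diff_subset)
    have hWD : ∀ x ∈ Set.Icc a b, c * D x ≤ W (u x) := by
      intro x _
      rcases le_total 0 (u x) with h | h
      · calc c * D x ≤ c * (u x - 1)^2 := mul_le_mul_of_nonneg_left (min_le_left _ _) hc.le
          _ ≤ W (u x) := hWp _ h
      · calc c * D x ≤ c * (u x + 1)^2 := mul_le_mul_of_nonneg_left (min_le_right _ _) hc.le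
          _ ≤ W (u x) := hWm _ h
    have hWint : IntegrableOn (fun x => W (u x)) (Set.Icc a b) :=
      (hWc.comp_continuousOn huc).integrableOn_Icc
    have hBc : c * ∫ x in Set.Icc a b, D x ≤ B := by
      have h := MeasureTheory.setIntegral_mono_on (hDint.const_mul c) hWint
        measurableSet_Icc hWD
      rwa [MeasureTheory.integral_const_mul] at h
    have hBfinal : c * (r^2 * (L/2)) ≤ B :=
      le_trans (mul_le_mul_of_nonneg_left (le_trans hint_good hDIcc) hc.le) hBc
    have hgoal1 : min (1/16 : ℝ) (9*c/2048) * A ≤ 9*c/2048 * A :=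
      mul_le_mul_of_nonneg_right (min_le_right _ _) hA0
    have hgoal2 : (9*c/2048) * A ≤ (9*c/2048) * (L * M^2) :=
      mul_le_mul_of_nonneg_left hA_le (by positivity)
    have hgoal3 : (9*c/2048) * (L * M^2) ≤ (L^2)⁻¹ * B := by
      rw [hrdef] at hBfinal
      have hL2 : (0:ℝ) < L^2 := by positivity
      have e : (9*c/2048) * (L * M^2) * L^2 = c * ((3*M*L/32)^2 * (L/2)) := by ring
      have h5 : (9*c/2048) * (L * M^2) * L^2 ≤ B := by rw [e]; exact hBfinal
      calc (9*c/2048) * (L * M^2) = ((9*c/2048) * (L * M^2) * L^2) / L^2 :=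
            (mul_div_cancel_right₀ _ hL2.ne').symm
        _ ≤ B / L^2 := div_le_div_of_nonneg_right h5 hL2.le
        _ = (L^2)⁻¹ * B := (inv_mul_eq_div _ _).symm
    have h4 : 0 ≤ L^2 * C2 := by positivity
    calc min (1/16 : ℝ) (9*c/2048) * A ≤ 9*c/2048 * A := hgoal1
      _ ≤ (9*c/2048) * (L * M^2) := hgoal2
      _ ≤ (L^2)⁻¹ * B := hgoal3
      _ ≤ (L^2)⁻¹ * B + L^2 * C2 := le_add_of_nonneg_right h4


/-- `u ∈ W^{2,2}(a,b)` with first derivative `u'` and second derivative `u''`: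
`u` is continuously differentiable on `[a,b]`, `u'` is absolutely continuous
(with a.e. derivative `u''`), and `u'' ∈ L²(a,b)`. -/
def W22On (u u' u'' : ℝ → ℝ) (a b : ℝ) : Prop :=
  (∀ x ∈ Set.Icc a b, HasDerivWithinAt u (u' x) (Set.Icc a b) x) ∧
  ContinuousOn u' (Set.Icc a b) ∧
  MeasureTheory.IntegrableOn u'' (Set.Icc a b) ∧
  MeasureTheory.IntegrableOn (fun x => (u'' x) ^ 2) (Set.Icc a b) ∧
  (∀ x ∈ Set.Icc a b, u' x = u' a + ∫ t in a..x, u'' t)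

/-- Nonlinear interpolation: there is a constant `k₀ > 0`, depending only on the
constant `c` in hypothesis (w), such that for every double-well potential `W`
satisfying the structural assumptions with this `c`, every `a < b` and every
`u ∈ W^{2,2}(a,b)`,
`k₀ ∫_a^b (u')² ≤ (b−a)⁻² ∫_a^b W(u) + (b−a)² ∫_a^b (u'')²`. -/

theorem nonlinear_interpolation (c : ℝ) (hc : 0 < c) :
    ∃ k₀ : ℝ, 0 < k₀ ∧
      ∀ W : ℝ → ℝ, Continuous W → (∀ s, 0 ≤ W s) →
        (∀ s, W s = 0 ↔ s = 1 ∨ s = -1) →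
        (∀ s, 0 ≤ s → c * (s - 1) ^ 2 ≤ W s) →
        (∀ s, s ≤ 0 → c * (s + 1) ^ 2 ≤ W s) →
        ∀ a b : ℝ, a < b → ∀ u u' u'' : ℝ → ℝ, W22On u u' u'' a b →
          k₀ * ∫ x in a..b, (u' x) ^ 2 ≤
            ((b - a) ^ 2)⁻¹ * (∫ x in a..b, W (u x)) +
              (b - a) ^ 2 * ∫ x in a..b, (u'' x) ^ 2 := by
  refine ⟨min (1/16 : ℝ) (9*c/2048), lt_min (by norm_num) (by positivity), ?_⟩
  intro W hWc hWnn _ hWp hWm a b hab u u' u'' hW22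
  obtain ⟨hder, hu'c, hi1, hi2, hfund⟩ := hW22
  exact test c hc W hWc hWnn hWp hWm a b hab u u' u'' hder hu'c hi1 hi2 hfund
end

section
/- For every a, b ∈ ℝ with a < b, every u ∈ W^{2,2}(a,b), every c > 0, and either choice of sign ±, one has c ∫_a^b (u')² dx ≤ c³ ∫_a^b (u'')² dx + ∫_a^b (u ± 1)²/c dx + (c u'(b) + u(b) ± 1)² − (c u'(a) + u(a) ± 1)². -/
open MeasureTheory intervalIntegral

lemma primitive_meas (a b : ℝ) (h : ℝ → ℝ) (hi : IntegrableOn h (Set.Ioc a b)) :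
    AEStronglyMeasurable (fun x => ∫ t in Set.Ioc a x, h t)
      (volume.restrict (Set.Ioc a b)) := by
  set h0 : ℝ → ℝ := (Set.Ioc a b).indicator h with hh0
  have h0i : Integrable h0 := (integrable_indicator_iff measurableSet_Ioc).2 hi
  have hcont : Continuous (fun x => ∫ t in Set.Ioc a x, h0 t) := by
    have : Continuous (fun x => ∫ t in a..x, h0 t) :=
      intervalIntegral.continuous_primitive (fun c d => h0i.intervalIntegrable) a
    have heq : (fun x => ∫ t in Set.Ioc a x, h0 t) = fun x => ∫ t in a..x, h0 t := by
      funext x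
      rcases le_or_gt a x with hx | hx
      · rw [intervalIntegral.integral_of_le hx]
      · have hempty : Set.Ioc x a ∩ Set.Ioc a b = ∅ := by
          ext t; simp only [Set.mem_inter_iff, Set.mem_Ioc, Set.mem_empty_iff_false,
            iff_false, not_and, and_imp]
          intro _ h1 h2; linarith
        have hz : ∫ t in Set.Ioc x a, h0 t = 0 := by
          rw [hh0, setIntegral_indicator measurableSet_Ioc, hempty]; simp
        rw [Set.Ioc_eq_empty (by exact fun h' => absurd hx (not_lt.2 h'.le)),
          intervalIntegral.integral_of_ge hx.le, hz]
        simp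
    rw [heq]; exact this
  refine hcont.aestronglyMeasurable.restrict.congr ?_
  filter_upwards [ae_restrict_mem measurableSet_Ioc] with x hx
  rw [hh0]
  rw [setIntegral_indicator measurableSet_Ioc]
  congr 1
  rw [Set.inter_eq_self_of_subset_left (Set.Ioc_subset_Ioc_right hx.2)]

lemma primitive_bound (a b : ℝ) (h : ℝ → ℝ) (hi : IntegrableOn h (Set.Ioc a b))
    (x : ℝ) (hx : x ∈ Set.Ioc a b) :
    ‖∫ t in Set.Ioc a x, h t‖ ≤ ∫ t in Set.Ioc a b, ‖h t‖ := by
  refine (MeasureTheory.norm_integral_le_integral_norm _).trans ?_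
  exact setIntegral_mono_set hi.norm (Filter.Eventually.of_forall fun t => norm_nonneg _)
    (HasSubset.Subset.eventuallyLE (Set.Ioc_subset_Ioc_right hx.2))

lemma prim_mul_integrable (a b : ℝ) (h : ℝ → ℝ) (hi : IntegrableOn h (Set.Ioc a b)) :
    Integrable (fun x => (∫ t in Set.Ioc a x, h t) * h x)
      (volume.restrict (Set.Ioc a b)) := by
  refine Integrable.bdd_mul (c := ∫ t in Set.Ioc a b, ‖h t‖) hi
    (primitive_meas a b h hi) ?_
  filter_upwards [ae_restrict_mem measurableSet_Ioc] with x hx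
  exact primitive_bound a b h hi x hx

lemma half_sq (a b : ℝ) (hab : a ≤ b) (h : ℝ → ℝ) (hi : IntegrableOn h (Set.Ioc a b)) :
    2 * ∫ x in Set.Ioc a b, (∫ t in Set.Ioc a x, h t) * h x
      = (∫ x in Set.Ioc a b, h x) ^ 2 := by
  set μ := volume.restrict (Set.Ioc a b) with hμ
  have hμi : Integrable h μ := hi
  -- Fubini : the two "triangle" integrals agree
  set S : Set (ℝ × ℝ) := {p | p.1 < p.2} with hS
  have hSm : MeasurableSet S := measurableSet_lt measurable_fst measurable_snd
  have hFi : Integrable (S.indicator fun p => h p.2 * h p.1) (μ.prod μ) := by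
    refine Integrable.indicator ?_ hSm
    have : (fun p : ℝ × ℝ => h p.2 * h p.1) = fun p => h p.1 * h p.2 := by
      funext p; ring
    rw [this]; exact hμi.mul_prod hμi
  have swap :
      ∫ x, (∫ t, S.indicator (fun p => h p.2 * h p.1) (x, t) ∂μ) ∂μ
        = ∫ t, (∫ x, S.indicator (fun p => h p.2 * h p.1) (x, t) ∂μ) ∂μ :=
    integral_integral_swap hFi
  have hL : ∫ x, (∫ t, S.indicator (fun p => h p.2 * h p.1) (x, t) ∂μ) ∂μ
      = ∫ x in Set.Ioc a b, (∫ t in Set.Ioc x b, h t) * h x := by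
    rw [hμ]
    refine setIntegral_congr_fun measurableSet_Ioc fun x hx => ?_
    have h1 : (fun t => S.indicator (fun p => h p.2 * h p.1) (x, t))
        = (Set.Ioi x).indicator (fun t => h t * h x) := by
      funext t
      by_cases ht2 : x < t
      · rw [Set.indicator_of_mem (show (x, t) ∈ S from ht2),
          Set.indicator_of_mem (show t ∈ Set.Ioi x from ht2)]
      · rw [Set.indicator_of_notMem (show (x, t) ∉ S from ht2),
          Set.indicator_of_notMem (show t ∉ Set.Ioi x from ht2)]
    rw [h1, MeasureTheory.integral_indicator measurableSet_Ioi,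
      Measure.restrict_restrict measurableSet_Ioi]
    have h2 : Set.Ioi x ∩ Set.Ioc a b = Set.Ioc x b := by
      ext t
      simp only [Set.mem_inter_iff, Set.mem_Ioi, Set.mem_Ioc]
      constructor
      · rintro ⟨h1', h2', h3'⟩; exact ⟨h1', h3'⟩
      · rintro ⟨h1', h2'⟩; exact ⟨h1', lt_trans hx.1 h1', h2'⟩
    rw [h2, MeasureTheory.integral_mul_const]
  have hR : ∫ t, (∫ x, S.indicator (fun p => h p.2 * h p.1) (x, t) ∂μ) ∂μ
      = ∫ t in Set.Ioc a b, (∫ x in Set.Ioc a t, h x) * h t := by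
    rw [hμ]
    refine setIntegral_congr_fun measurableSet_Ioc fun t ht => ?_
    have h1 : (fun x => S.indicator (fun p => h p.2 * h p.1) (x, t))
        = (Set.Iio t).indicator (fun x => h t * h x) := by
      funext x
      by_cases hxt : x < t
      · rw [Set.indicator_of_mem (show (x, t) ∈ S from hxt),
          Set.indicator_of_mem (show x ∈ Set.Iio t from hxt)]
      · rw [Set.indicator_of_notMem (show (x, t) ∉ S from hxt),
          Set.indicator_of_notMem (show x ∉ Set.Iio t from hxt)]
    rw [h1, MeasureTheory.integral_indicator measurableSet_Iio,
      Measure.restrict_restrict measurableSet_Iio]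
    have h2 : Set.Iio t ∩ Set.Ioc a b = Set.Ioo a t := by
      ext x
      simp only [Set.mem_inter_iff, Set.mem_Iio, Set.mem_Ioc, Set.mem_Ioo]
      constructor
      · rintro ⟨h1', h2', h3'⟩; exact ⟨h2', h1'⟩
      · rintro ⟨h1', h2'⟩; exact ⟨h2', h1', le_trans h2'.le ht.2⟩
    rw [h2, ← integral_Ioc_eq_integral_Ioo, MeasureTheory.integral_const_mul, mul_comm]
  have swap2 : ∫ x in Set.Ioc a b, (∫ t in Set.Ioc x b, h t) * h x
      = ∫ x in Set.Ioc a b, (∫ t in Set.Ioc a x, h t) * h x := by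
    rw [← hL, swap, hR]
  have hf1 : Integrable (fun x => (∫ t in Set.Ioc a x, h t) * h x) μ :=
    prim_mul_integrable a b h hi
  set T : ℝ := ∫ x in Set.Ioc a b, h x with hT
  have hsplit : ∀ x ∈ Set.Ioc a b,
      T * h x = (∫ t in Set.Ioc a x, h t) * h x + (∫ t in Set.Ioc x b, h t) * h x := by
    intro x hx
    rw [← add_mul]
    congr 1
    rw [hT, ← Set.Ioc_union_Ioc_eq_Ioc hx.1.le hx.2,
      setIntegral_union (Set.Ioc_disjoint_Ioc_of_le le_rfl) measurableSet_Ioc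
        (hi.mono_set (Set.Ioc_subset_Ioc_right hx.2))
        (hi.mono_set (Set.Ioc_subset_Ioc_left hx.1.le))]
  have hf2 : Integrable (fun x => (∫ t in Set.Ioc x b, h t) * h x) μ := by
    refine ((hμi.const_mul T).sub hf1).congr ?_
    filter_upwards [ae_restrict_mem measurableSet_Ioc] with x hx
    have := hsplit x hx
    simp only [Pi.sub_apply]
    linarith
  have hTsq : T ^ 2 = (∫ x in Set.Ioc a b, (∫ t in Set.Ioc a x, h t) * h x)
      + ∫ x in Set.Ioc a b, (∫ t in Set.Ioc x b, h t) * h x := by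
    rw [← integral_add hf1 hf2]
    have : ∫ x in Set.Ioc a b,
        ((∫ t in Set.Ioc a x, h t) * h x + (∫ t in Set.Ioc x b, h t) * h x)
        = ∫ x in Set.Ioc a b, T * h x :=
      (setIntegral_congr_fun measurableSet_Ioc fun x hx => (hsplit x hx).symm)
    rw [this, MeasureTheory.integral_const_mul, ← hT, sq]
  rw [hTsq, swap2]
  ring

open intervalIntegral in
theorem main_thm
    (a b : ℝ) (hab : a < b) (u u' u'' : ℝ → ℝ)
    (hderiv : ∀ x ∈ Set.Icc a b, HasDerivWithinAt u (u' x) (Set.Icc a b) x)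
    (hu'cont : ContinuousOn u' (Set.Icc a b))
    (hu''int : MeasureTheory.IntegrableOn u'' (Set.Icc a b))
    (hu''sq : MeasureTheory.IntegrableOn (fun x => (u'' x) ^ 2) (Set.Icc a b))
    (hrep : ∀ x ∈ Set.Icc a b, u' x = u' a + ∫ t in a..x, u'' t)
    (c : ℝ) (hc : 0 < c) (σ : ℝ) :
    c * ∫ x in a..b, (u' x) ^ 2 ≤
      c ^ 3 * (∫ x in a..b, (u'' x) ^ 2) +
        (∫ x in a..b, (u x + σ) ^ 2 / c) +
        (c * u' b + u b + σ) ^ 2 - (c * u' a + u a + σ) ^ 2 := by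
  have hucont : ContinuousOn u (Set.Icc a b) := fun x hx =>
    (hderiv x hx).continuousWithinAt
  set g : ℝ → ℝ := fun x => c * u' x + u x + σ with hg
  set h : ℝ → ℝ := fun x => c * u'' x + u' x with hh
  -- FTC for u
  have hufc : ∀ x ∈ Set.Icc a b, u x = u a + ∫ t in a..x, u' t := by
    intro x hx
    have := intervalIntegral.integral_eq_sub_of_hasDeriv_right_of_le hx.1
      (hucont.mono (Set.Icc_subset_Icc_right hx.2))
      (fun y hy => by
        have hy' : y ∈ Set.Icc a b := ⟨hy.1.le, hy.2.le.trans hx.2⟩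
        have hyb : y < b := lt_of_lt_of_le hy.2 hx.2
        refine (hderiv y hy').mono_of_mem_nhdsWithin ?_
        exact Filter.mem_of_superset (Ioc_mem_nhdsGT_of_mem ⟨le_refl y, hyb⟩)
          (fun t ht => ⟨(hy.1.trans ht.1).le, ht.2⟩))
      ((hu'cont.mono (Set.Icc_subset_Icc_right hx.2)).intervalIntegrable_of_Icc hx.1)
    linarith
  -- integrability of h etc.
  have hu''Ioc : MeasureTheory.IntegrableOn u'' (Set.Ioc a b) :=
    hu''int.mono_set Set.Ioc_subset_Icc_self
  have hu'Ioc : MeasureTheory.IntegrableOn u' (Set.Ioc a b) :=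
    (hu'cont.integrableOn_Icc).mono_set Set.Ioc_subset_Icc_self
  have hhint : MeasureTheory.IntegrableOn h (Set.Ioc a b) :=
    (hu''Ioc.const_mul c).add hu'Ioc
  -- representation of g
  have hgrep : ∀ x ∈ Set.Icc a b, g x = g a + ∫ t in Set.Ioc a x, h t := by
    intro x hx
    have hiu'' : IntervalIntegrable u'' MeasureTheory.volume a x := by
      rw [intervalIntegrable_iff_integrableOn_Ioc_of_le hx.1]
      exact hu''Ioc.mono_set (Set.Ioc_subset_Ioc_right hx.2)
    have hiu' : IntervalIntegrable u' MeasureTheory.volume a x :=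
      (hu'cont.mono (Set.Icc_subset_Icc_right hx.2)).intervalIntegrable_of_Icc hx.1
    have : ∫ t in Set.Ioc a x, h t = c * (∫ t in a..x, u'' t) + ∫ t in a..x, u' t := by
      rw [← intervalIntegral.integral_of_le hx.1, hh,
        intervalIntegral.integral_add (hiu''.const_mul c) hiu',
        intervalIntegral.integral_const_mul]
    rw [this, hg]
    have h1 := hrep x hx
    have h2 := hufc x hx
    show c * u' x + u x + σ = c * u' a + u a + σ + _
    rw [h1, h2]
    ring
  -- integrability of the product terms
  have hPmul := prim_mul_integrable a b h hhint
  have hghae : ∀ x ∈ Set.Ioc a b,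
      2 * g a * h x + 2 * ((∫ t in Set.Ioc a x, h t) * h x) = 2 * g x * h x := by
    intro x hx
    rw [hgrep x (Set.Ioc_subset_Icc_self hx)]
    ring
  have hghint : MeasureTheory.IntegrableOn (fun x => 2 * g x * h x) (Set.Ioc a b) := by
    refine ((hhint.const_mul (2 * g a)).add (hPmul.const_mul 2)).congr ?_
    filter_upwards [MeasureTheory.ae_restrict_mem measurableSet_Ioc] with x hx
    exact hghae x hx
  -- boundary identity
  have hbdry : ∫ x in Set.Ioc a b, 2 * g x * h x = g b ^ 2 - g a ^ 2 := by
    have h1 : ∫ x in Set.Ioc a b, 2 * g x * h x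
        = ∫ x in Set.Ioc a b,
            (2 * g a * h x + 2 * ((∫ t in Set.Ioc a x, h t) * h x)) :=
      (MeasureTheory.setIntegral_congr_fun measurableSet_Ioc
        fun x hx => (hghae x hx).symm)
    rw [h1, MeasureTheory.integral_add (hhint.const_mul (2 * g a)) (hPmul.const_mul 2),
      MeasureTheory.integral_const_mul, MeasureTheory.integral_const_mul]
    have h2 := half_sq a b hab.le h hhint
    have h3 := hgrep b ⟨hab.le, le_refl b⟩
    rw [h3]
    nlinarith [h2]
  -- pointwise inequality
  have hpt : ∀ x ∈ Set.Ioc a b, c * (u' x) ^ 2 ≤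
      c ^ 3 * (u'' x) ^ 2 + (u x + σ) ^ 2 / c + 2 * g x * h x := by
    intro x _
    have hkey : c ^ 3 * (u'' x) ^ 2 + (u x + σ) ^ 2 / c + 2 * g x * h x
        - c * (u' x) ^ 2 = (c * h x + (u x + σ)) ^ 2 / c := by
      simp only [hg, hh]
      field_simp
      ring
    nlinarith [hkey, div_nonneg (sq_nonneg (c * h x + (u x + σ))) hc.le]
  -- remaining integrabilities
  have Iu'sq : MeasureTheory.IntegrableOn (fun x => c * (u' x) ^ 2) (Set.Ioc a b) :=
    ((continuousOn_const.mul (hu'cont.pow 2)).integrableOn_Icc).mono_set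
      Set.Ioc_subset_Icc_self
  have Iu''sq : MeasureTheory.IntegrableOn (fun x => c ^ 3 * (u'' x) ^ 2)
      (Set.Ioc a b) :=
    (hu''sq.mono_set Set.Ioc_subset_Icc_self).const_mul (c ^ 3)
  have Iv : MeasureTheory.IntegrableOn (fun x => (u x + σ) ^ 2 / c) (Set.Ioc a b) :=
    ((((hucont.add continuousOn_const).pow 2).div_const c).integrableOn_Icc).mono_set
      Set.Ioc_subset_Icc_self
  have Isum : MeasureTheory.IntegrableOn
      (fun x => c ^ 3 * (u'' x) ^ 2 + (u x + σ) ^ 2 / c) (Set.Ioc a b) :=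
    Iu''sq.add Iv
  -- assembly
  rw [intervalIntegral.integral_of_le hab.le, intervalIntegral.integral_of_le hab.le,
    intervalIntegral.integral_of_le hab.le]
  have step1 : c * ∫ x in Set.Ioc a b, (u' x) ^ 2
      = ∫ x in Set.Ioc a b, c * (u' x) ^ 2 :=
    (MeasureTheory.integral_const_mul c _).symm
  have step2 : (∫ x in Set.Ioc a b, c * (u' x) ^ 2)
      ≤ ∫ x in Set.Ioc a b,
          (c ^ 3 * (u'' x) ^ 2 + (u x + σ) ^ 2 / c + 2 * g x * h x) :=
    MeasureTheory.setIntegral_mono_on Iu'sq (Isum.add hghint)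
      measurableSet_Ioc hpt
  have step3 : ∫ x in Set.Ioc a b,
        (c ^ 3 * (u'' x) ^ 2 + (u x + σ) ^ 2 / c + 2 * g x * h x)
      = c ^ 3 * (∫ x in Set.Ioc a b, (u'' x) ^ 2)
        + (∫ x in Set.Ioc a b, (u x + σ) ^ 2 / c) + (g b ^ 2 - g a ^ 2) := by
    rw [MeasureTheory.integral_add Isum hghint,
      MeasureTheory.integral_add Iu''sq Iv, MeasureTheory.integral_const_mul, hbdry]
  have hgb : g b = c * u' b + u b + σ := rfl
  have hga : g a = c * u' a + u a + σ := rfl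
  rw [step1]
  refine step2.trans (le_of_eq ?_)
  rw [step3, hgb, hga]
  ring


/-- Interpolation with boundary terms: for every `a < b`, every `u ∈ W^{2,2}(a,b)`,
every `c > 0` and either choice of sign `σ = ±1`,
`c ∫_a^b (u')² ≤ c³ ∫_a^b (u'')² + ∫_a^b (u+σ)²/c + (c u'(b)+u(b)+σ)² − (c u'(a)+u(a)+σ)²`. -/
theorem interpolation_with_boundary_terms
    (a b : ℝ) (hab : a < b) (u u' u'' : ℝ → ℝ) (hu : W22On u u' u'' a b)
    (c : ℝ) (hc : 0 < c) (σ : ℝ) (hσ : σ = 1 ∨ σ = -1) :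
    c * ∫ x in a..b, (u' x) ^ 2 ≤
      c ^ 3 * (∫ x in a..b, (u'' x) ^ 2) +
        (∫ x in a..b, (u x + σ) ^ 2 / c) +
        (c * u' b + u b + σ) ^ 2 - (c * u' a + u a + σ) ^ 2 := by
  obtain ⟨h1, h2, h3, h4, h5⟩ := hu
  exact main_thm a b hab u u' u'' h1 h2 h3 h4 h5 c hc σ
end

section
/- Let k₀ > 0 be the constant from the nonlinear interpolation inequality for W and let 0 < k < k₀. Let I ⊂ ℝ be an open bounded interval, (ε_j) a sequence of positive numbers tending to 0, and (u_j) ⊂ W^{2,2}(I) a sequence with sup_j F^k_{ε_j}(u_j, I) < +∞. Then there exist a subsequence (u_{j_m}) and a function u ∈ BV(I; {−1, 1}) such that u_{j_m} → u in L¹(I). -/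
open MeasureTheory intervalIntegral Filter

section Aux
open Set

lemma W22On.continuousOn {u u' u'' : ℝ → ℝ} {a b : ℝ} (h : W22On u u' u'' a b) :
    ContinuousOn u (Set.Icc a b) :=
  fun x hx => (h.1 x hx).continuousWithinAt

lemma W22On.mono {u u' u'' : ℝ → ℝ} {a b a' b' : ℝ} (h : W22On u u' u'' a b)
    (ha : a ≤ a') (hb : b' ≤ b) : W22On u u' u'' a' b' := by
  obtain ⟨h1, h2, h3, h4, h5⟩ := h
  have hsub : Set.Icc a' b' ⊆ Set.Icc a b := Set.Icc_subset_Icc ha hb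
  refine ⟨fun x hx => (h1 x (hsub hx)).mono hsub, h2.mono hsub, h3.mono_set hsub,
    h4.mono_set hsub, fun x hx => ?_⟩
  have hx' := hsub hx
  have ha'mem : a' ∈ Set.Icc a b := ⟨ha, le_trans (le_trans hx.1 hx.2) hb⟩
  have i1 : IntervalIntegrable u'' volume a x :=
    (h3.mono_set (by rw [Set.uIcc_of_le hx'.1]; exact Set.Icc_subset_Icc le_rfl hx'.2)).intervalIntegrable
  have i2 : IntervalIntegrable u'' volume a a' :=
    (h3.mono_set (by rw [Set.uIcc_of_le ha'mem.1]; exact Set.Icc_subset_Icc le_rfl ha'mem.2)).intervalIntegrable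
  have e1 := h5 x hx'
  have e2 := h5 a' ha'mem
  have : (∫ t in a..x, u'' t) - ∫ t in a..a', u'' t = ∫ t in a'..x, u'' t :=
    intervalIntegral.integral_interval_sub_left i1 i2
  rw [e1, e2]
  linarith [this]


lemma evar_sub_mono {p q : ℝ → ℝ} {s : Set ℝ} {K : ℝ}
    (hp : MonotoneOn p s) (hq : MonotoneOn q s)
    (hpb : ∀ x ∈ s, |p x| ≤ K) (hqb : ∀ x ∈ s, |q x| ≤ K) :
    BoundedVariationOn (fun x => p x - q x) s := by
  have hb : eVariationOn (fun x => p x - q x) s ≤ ENNReal.ofReal (4 * K) := by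
    apply iSup_le
    rintro ⟨n, ⟨w, hw, hws⟩⟩
    have key : ∀ i, edist ((fun x => p x - q x) (w (i + 1))) ((fun x => p x - q x) (w i)) ≤
        ENNReal.ofReal ((p (w (i+1)) - p (w i)) + (q (w (i+1)) - q (w i))) := by
      intro i
      have h1 : p (w i) ≤ p (w (i+1)) := hp (hws i) (hws (i+1)) (hw (Nat.le_succ i))
      have h2 : q (w i) ≤ q (w (i+1)) := hq (hws i) (hws (i+1)) (hw (Nat.le_succ i))
      rw [edist_dist, Real.dist_eq]
      apply ENNReal.ofReal_le_ofReal
      rw [abs_le]; constructor <;> simp only [] <;> nlinarith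
    calc (∑ i ∈ Finset.range n, edist ((fun x => p x - q x) (w (i + 1))) ((fun x => p x - q x) (w i)))
        ≤ ∑ i ∈ Finset.range n, ENNReal.ofReal ((p (w (i+1)) - p (w i)) + (q (w (i+1)) - q (w i))) :=
          Finset.sum_le_sum fun i _ => key i
      _ = ENNReal.ofReal (∑ i ∈ Finset.range n, ((p (w (i+1)) - p (w i)) + (q (w (i+1)) - q (w i)))) := by
          rw [ENNReal.ofReal_sum_of_nonneg]
          intro i _
          have h1 : p (w i) ≤ p (w (i+1)) := hp (hws i) (hws (i+1)) (hw (Nat.le_succ i))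
          have h2 : q (w i) ≤ q (w (i+1)) := hq (hws i) (hws (i+1)) (hw (Nat.le_succ i))
          linarith
      _ ≤ ENNReal.ofReal (4 * K) := by
          apply ENNReal.ofReal_le_ofReal
          rw [Finset.sum_add_distrib, Finset.sum_range_sub fun i => p (w i),
            Finset.sum_range_sub fun i => q (w i)]
          have := hpb _ (hws 0); have := hpb _ (hws n)
          have := hqb _ (hws 0); have := hqb _ (hws n)
          rw [abs_le] at *
          linarith
  exact (hb.trans_lt ENNReal.ofReal_lt_top).ne

lemma evar_le_integral {f h : ℝ → ℝ} {a b : ℝ} (hab : a ≤ b)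
    (hint : MeasureTheory.IntegrableOn h (Set.Icc a b))
    (hrep : ∀ x ∈ Set.Icc a b, ∀ y ∈ Set.Icc a b, f y - f x = ∫ t in x..y, h t) :
    eVariationOn f (Set.Ioo a b) ≤ ENNReal.ofReal (∫ t in a..b, |h t|) := by
  have hint' : ∀ x ∈ Set.Icc a b, ∀ y ∈ Set.Icc a b, x ≤ y → IntervalIntegrable h volume x y := by
    intro x hx y hy hxy
    exact (hint.mono_set (by rw [Set.uIcc_of_le hxy]; exact Set.Icc_subset_Icc hx.1 hy.2)).intervalIntegrable
  have habs : MeasureTheory.IntegrableOn (fun t => |h t|) (Set.Icc a b) := hint.abs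
  have habs' : ∀ x ∈ Set.Icc a b, ∀ y ∈ Set.Icc a b, x ≤ y → IntervalIntegrable (fun t => |h t|) volume x y := by
    intro x hx y hy hxy
    exact (habs.mono_set (by rw [Set.uIcc_of_le hxy]; exact Set.Icc_subset_Icc hx.1 hy.2)).intervalIntegrable
  apply iSup_le
  rintro ⟨n, ⟨w, hw, hws⟩⟩
  have hmem : ∀ i, w i ∈ Set.Icc a b := fun i => Set.Ioo_subset_Icc_self (hws i)
  have key : ∀ i, edist (f (w (i + 1))) (f (w i)) ≤
      ENNReal.ofReal (∫ t in (w i)..(w (i+1)), |h t|) := by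
    intro i
    rw [edist_dist, Real.dist_eq]
    apply ENNReal.ofReal_le_ofReal
    rw [hrep _ (hmem i) _ (hmem (i+1))]
    calc |∫ t in (w i)..(w (i+1)), h t| ≤ ∫ t in (w i)..(w (i+1)), |h t| :=
          intervalIntegral.abs_integral_le_integral_abs (hw (Nat.le_succ i))
      _ = _ := rfl
  calc (∑ i ∈ Finset.range n, edist (f (w (i + 1))) (f (w i)))
      ≤ ∑ i ∈ Finset.range n, ENNReal.ofReal (∫ t in (w i)..(w (i+1)), |h t|) :=
        Finset.sum_le_sum fun i _ => key i
    _ = ENNReal.ofReal (∑ i ∈ Finset.range n, ∫ t in (w i)..(w (i+1)), |h t|) := by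
        rw [ENNReal.ofReal_sum_of_nonneg]
        intro i _
        apply intervalIntegral.integral_nonneg (hw (Nat.le_succ i))
        intros; positivity
    _ = ENNReal.ofReal (∫ t in (w 0)..(w n), |h t|) := by
        rw [intervalIntegral.sum_integral_adjacent_intervals]
        intro i _
        exact habs' _ (hmem i) _ (hmem (i+1)) (hw (Nat.le_succ i))
    _ ≤ ENNReal.ofReal (∫ t in a..b, |h t|) := by
        apply ENNReal.ofReal_le_ofReal
        apply intervalIntegral.integral_mono_interval (hmem 0).1 (hw (Nat.zero_le n)) (hmem n).2
        · filter_upwards with t using abs_nonneg _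
        · exact habs' a (Set.left_mem_Icc.2 hab) b (Set.right_mem_Icc.2 hab) hab

lemma hasDerivAt_primitive {g : ℝ → ℝ} (hg : Continuous g) (y : ℝ) :
    HasDerivAt (fun s => ∫ t in (0:ℝ)..s, g t) (g y) y :=
  intervalIntegral.integral_hasDerivAt_right (hg.intervalIntegrable 0 y)
    (hg.stronglyMeasurable.stronglyMeasurableAtFilter) hg.continuousAt

lemma comp_antideriv {u uu' g : ℝ → ℝ} {α β : ℝ}
    (hg : Continuous g)
    (hu : ∀ x ∈ Set.Icc α β, HasDerivWithinAt u (uu' x) (Set.Icc α β) x)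
    (hu' : ContinuousOn uu' (Set.Icc α β)) :
    ∀ x ∈ Set.Icc α β, ∀ y ∈ Set.Icc α β,
      (∫ t in (0:ℝ)..(u y), g t) - (∫ t in (0:ℝ)..(u x), g t) = ∫ t in x..y, g (u t) * uu' t := by
  set G : ℝ → ℝ := fun s => ∫ t in (0:ℝ)..s, g t with hGdef
  have hGd : ∀ y, HasDerivAt G (g y) y := hasDerivAt_primitive hg
  have hGc : Continuous G := by
    have : Differentiable ℝ G := fun y => (hGd y).differentiableAt
    exact this.continuous
  have huc : ContinuousOn u (Set.Icc α β) := fun x hx => (hu x hx).continuousWithinAt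
  have hFc : ContinuousOn (fun t => G (u t)) (Set.Icc α β) := hGc.comp_continuousOn huc
  have hF'c : ContinuousOn (fun t => g (u t) * uu' t) (Set.Icc α β) :=
    (hg.comp_continuousOn huc).mul hu'
  -- main claim for x ≤ y
  have main : ∀ x ∈ Set.Icc α β, ∀ y ∈ Set.Icc α β, x ≤ y →
      G (u y) - G (u x) = ∫ t in x..y, g (u t) * uu' t := by
    intro x hx y hy hxy
    have hsub : Set.Icc x y ⊆ Set.Icc α β := Set.Icc_subset_Icc hx.1 hy.2
    refine (intervalIntegral.integral_eq_sub_of_hasDeriv_right_of_le hxy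
      (hFc.mono hsub) (fun t ht => ?_) ?_).symm
    · have htmem : t ∈ Set.Icc α β := hsub (Set.Ioo_subset_Icc_self ht)
      have hD : HasDerivWithinAt (fun t => G (u t)) (g (u t) * uu' t) (Set.Icc α β) t :=
        (hGd (u t)).comp_hasDerivWithinAt t (hu t htmem)
      apply hD.mono_of_mem_nhdsWithin
      apply Filter.mem_of_superset (Ioc_mem_nhdsGT_of_mem ⟨le_refl t, lt_of_lt_of_le ht.2 hy.2⟩)
      exact fun z hz => ⟨le_trans htmem.1 (le_of_lt hz.1), hz.2⟩
    · exact (hF'c.mono hsub).intervalIntegrable_of_Icc hxy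
  intro x hx y hy
  rcases le_total x y with hxy | hyx
  · exact main x hx y hy hxy
  · have h2 := main y hy x hx hyx
    rw [intervalIntegral.integral_symm x y] at h2
    linarith [h2]

lemma helly_mono {α β K : ℝ} (hαβ : α < β) (hK : 0 ≤ K) (p : ℕ → ℝ → ℝ)
    (hmono : ∀ j, MonotoneOn (p j) (Set.Ioo α β))
    (hbd : ∀ j, ∀ x ∈ Set.Ioo α β, |p j x| ≤ K) :
    ∃ ψ : ℕ → ℕ, StrictMono ψ ∧ ∃ P : ℝ → ℝ, Monotone P ∧ (∀ x, |P x| ≤ K) ∧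
      ∀ᵐ x ∂(MeasureTheory.volume.restrict (Set.Ioo α β)),
        Tendsto (fun m => p (ψ m) x) atTop (nhds (P x)) := by
  obtain ⟨ρ, hρ⟩ : ∃ ρ : ℕ → ℝ, DenseRange ρ :=
    ⟨TopologicalSpace.denseSeq ℝ, TopologicalSpace.denseRange_denseSeq ℝ⟩
  have hdense : ∀ x y : ℝ, x < y → ∃ n, ρ n ∈ Set.Ioo x y := by
    intro x y hxy
    exact hρ.exists_mem_open isOpen_Ioo (Set.nonempty_Ioo.2 hxy)
  have hKK : -K ≤ K := by linarith
  -- clamped values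
  set a : ℕ → ℕ → Set.Icc (-K) K := fun j n =>
    ⟨max (-K) (min K (if ρ n ∈ Set.Ioo α β then p j (ρ n) else 0)),
      le_max_left _ _, max_le hKK (min_le_left _ _)⟩ with ha
  have hclamp : ∀ j n, ρ n ∈ Set.Ioo α β → ((a j n : ℝ)) = p j (ρ n) := by
    intro j n hn
    have := hbd j (ρ n) hn
    rw [abs_le] at this
    simp only [ha, hn, if_pos]
    rw [min_eq_right this.2, max_eq_right this.1]
  obtain ⟨L, ψ, hψ, hconv⟩ := CompactSpace.tendsto_subseq (fun j => a j)
  have hpt : ∀ n, Tendsto (fun m => ((a (ψ m) n : ℝ))) atTop (nhds ((L n : ℝ))) := by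
    intro n
    have h1 := tendsto_pi_nhds.1 hconv n
    exact (continuous_subtype_val.tendsto _).comp h1
  set P' : ℕ → ℝ := fun n => (L n : ℝ) with hP'
  have hP'bd : ∀ n, -K ≤ P' n ∧ P' n ≤ K := fun n => (L n).2
  have hP'mono : ∀ m n, ρ m ∈ Set.Ioo α β → ρ n ∈ Set.Ioo α β → ρ m ≤ ρ n → P' m ≤ P' n := by
    intro m n hm hn hmn
    refine le_of_tendsto_of_tendsto' (hpt m) (hpt n) (fun t => ?_)
    rw [hclamp _ _ hm, hclamp _ _ hn]
    exact hmono _ hm hn hmn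
  set S : ℝ → Set ℝ := fun x => {z | ∃ n, ρ n ∈ Set.Ioo α β ∧ x < ρ n ∧ z = P' n} with hS
  set P : ℝ → ℝ := fun x => sInf (insert K (S x)) with hPdef
  have hSlb : ∀ x, ∀ z ∈ insert K (S x), -K ≤ z := by
    rintro x z (rfl | ⟨n, _, _, rfl⟩)
    · exact hKK
    · exact (hP'bd n).1
  have hSbdd : ∀ x, BddBelow (insert K (S x)) := fun x => ⟨-K, hSlb x⟩
  have hSne : ∀ x, (insert K (S x)).Nonempty := fun x => ⟨K, Set.mem_insert _ _⟩
  have hPmono : Monotone P := by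
    intro x y hxy
    apply csInf_le_csInf (hSbdd x) (hSne y)
    rintro z (rfl | ⟨n, hn, hlt, rfl⟩)
    · exact Set.mem_insert _ _
    · exact Set.mem_insert_of_mem _ ⟨n, hn, lt_of_le_of_lt hxy hlt, rfl⟩
  have hPbd : ∀ x, |P x| ≤ K := by
    intro x
    rw [abs_le]
    constructor
    · exact le_csInf (hSne x) (hSlb x)
    · exact csInf_le (hSbdd x) (Set.mem_insert _ _)
  refine ⟨ψ, hψ, P, hPmono, hPbd, ?_⟩
  have hconvpt : ∀ x ∈ Set.Ioo α β, ContinuousAt P x →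
      Tendsto (fun m => p (ψ m) x) atTop (nhds (P x)) := by
    intro x hx hcont
    rw [Metric.tendsto_atTop]
    intro ε hε
    -- upper rational point
    have hup : ∃ n, ρ n ∈ Set.Ioo α β ∧ x < ρ n ∧ P' n < P x + ε := by
      obtain ⟨z, hz, hzlt⟩ := exists_lt_of_csInf_lt (hSne x) (by linarith : P x < P x + ε)
      rcases hz with rfl | ⟨n, hn, hlt, rfl⟩
      · obtain ⟨n, hn⟩ := hdense x β hx.2
        exact ⟨n, ⟨lt_trans hx.1 hn.1, hn.2⟩, hn.1, lt_of_le_of_lt (hP'bd n).2 hzlt⟩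
      · exact ⟨n, hn, hlt, hzlt⟩
    obtain ⟨n, hn, hxn, hnP⟩ := hup
    -- lower rational point
    obtain ⟨δ, hδ, hδP⟩ := Metric.continuousAt_iff.1 hcont (ε/2) (by linarith)
    set y : ℝ := max ((α + x)/2) (x - δ/2) with hy
    have hyx : y < x := by
      apply max_lt
      · linarith [hx.1]
      · linarith
    have hyα : α < y := lt_of_lt_of_le (by linarith [hx.1]) (le_max_left _ _)
    have hydist : dist y x < δ := by
      rw [Real.dist_eq, abs_lt]
      constructor
      · have : x - δ/2 ≤ y := le_max_right _ _
        linarith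
      · linarith
    have hPy : P x - ε/2 < P y := by
      have := hδP hydist
      rw [Real.dist_eq, abs_lt] at this
      linarith [this.1]
    obtain ⟨n₁, hn₁⟩ := hdense y x hyx
    have hn₁mem : ρ n₁ ∈ Set.Ioo α β := ⟨lt_trans hyα hn₁.1, lt_trans hn₁.2 hx.2⟩
    have hPyn₁ : P y ≤ P' n₁ :=
      csInf_le (hSbdd y) (Set.mem_insert_of_mem _ ⟨n₁, hn₁mem, hn₁.1, rfl⟩)
    have hlow : P x - ε < P' n₁ := by linarith
    -- eventual bounds
    have hev1 : ∀ᶠ m in atTop, P x - ε < ((a (ψ m) n₁ : ℝ)) :=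
      (hpt n₁).eventually (eventually_gt_nhds hlow)
    have hev2 : ∀ᶠ m in atTop, ((a (ψ m) n : ℝ)) < P x + ε :=
      (hpt n).eventually (eventually_lt_nhds hnP)
    rw [eventually_atTop] at hev1 hev2
    obtain ⟨N₁, hN₁⟩ := hev1
    obtain ⟨N₂, hN₂⟩ := hev2
    refine ⟨max N₁ N₂, fun m hm => ?_⟩
    have h1 := hN₁ m (le_trans (le_max_left _ _) hm)
    have h2 := hN₂ m (le_trans (le_max_right _ _) hm)
    rw [hclamp _ _ hn₁mem] at h1
    rw [hclamp _ _ hn] at h2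
    have hle1 : p (ψ m) (ρ n₁) ≤ p (ψ m) x := hmono _ hn₁mem hx (le_of_lt hn₁.2)
    have hle2 : p (ψ m) x ≤ p (ψ m) (ρ n) := hmono _ hx hn (le_of_lt hxn)
    rw [Real.dist_eq, abs_lt]
    constructor <;> linarith
  have hcount : {x | ¬ContinuousAt P x}.Countable := hPmono.countable_not_continuousAt
  have hnull : (MeasureTheory.volume : Measure ℝ) {x | ¬ContinuousAt P x} = 0 :=
    hcount.measure_zero _
  have h1 : ∀ᵐ x ∂(MeasureTheory.volume.restrict (Set.Ioo α β)), ContinuousAt P x := by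
    apply ae_restrict_of_ae
    rw [MeasureTheory.ae_iff]
    simpa using hnull
  filter_upwards [h1, ae_restrict_mem measurableSet_Ioo] with x hc hx
  exact hconvpt x hx hc

set_option maxHeartbeats 1000000 in
lemma coerc_arith {r e ℓ κ P T Q M k k₀ : ℝ} (hr : r = k/k₀) (hr0 : 0 < r) (hr1 : r < 1)
    (he : 0 < e) (hℓpos : 0 < ℓ) (hℓe : ℓ ≤ e) (hκ : e ≤ ℓ * κ)
    (hcond : r * κ^2 ≤ (1+r)/2) (hk₀pos : 0 < k₀) (hkpos : 0 < k)
    (hPpos : 0 ≤ P) (hTpos : 0 ≤ T) (hQpos : 0 ≤ Q)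
    (hsumineq : k₀ * T ≤ (ℓ^2)⁻¹ * P + ℓ^2 * Q)
    (hM : P/e - k*e*T + e^3*Q ≤ M) :
    P ≤ (2 * M / (1 - r)) * e ∧ e ^ 3 * Q ≤ 2 * M / (1 - r) ∧
      e * T ≤ (2/k) * (2 * M / (1 - r)) ∧ 0 ≤ M := by

  -- key arithmetic
  have hkey : k * e * T ≤ (1+r)/2 * (P/e) + r * (e^3 * Q) := by
    have h1 : k * e * T = r * e * (k₀ * T) := by
      rw [hr]; field_simp
    have h2 : r * e * (k₀ * T) ≤ r * e * ((ℓ^2)⁻¹ * P + ℓ^2 * Q) := by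
      apply mul_le_mul_of_nonneg_left hsumineq
      positivity
    have he2 : e^2 ≤ ℓ^2 * κ^2 := by
      have h9 := mul_self_le_mul_self (le_of_lt he) hκ
      nlinarith [h9]
    have hc : r * e^2 ≤ (1+r)/2 * ℓ^2 := by
      nlinarith [mul_le_mul_of_nonneg_left he2 (le_of_lt hr0),
        mul_le_mul_of_nonneg_left hcond (sq_nonneg ℓ)]
    have hc' : r * e * (ℓ^2)⁻¹ ≤ (1+r)/2 / e := by
      have hl2 : (0:ℝ) < ℓ^2 := by positivity
      rw [le_div_iff₀ he]
      have heq : r * e * (ℓ^2)⁻¹ * e = r * e^2 / ℓ^2 := by field_simp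
      rw [heq, div_le_iff₀ hl2]
      nlinarith [hc]
    have h3 : r * e * ((ℓ^2)⁻¹ * P) ≤ (1+r)/2 * (P/e) := by
      have := mul_le_mul_of_nonneg_right hc' hPpos
      calc r * e * ((ℓ^2)⁻¹ * P) = (r * e * (ℓ^2)⁻¹) * P := by ring
        _ ≤ ((1+r)/2 / e) * P := this
        _ = (1+r)/2 * (P/e) := by ring
    have h4 : r * e * (ℓ^2 * Q) ≤ r * (e^3 * Q) := by
      have hle2 : ℓ^2 ≤ e^2 := by nlinarith
      nlinarith [mul_le_mul_of_nonneg_left hle2 (by positivity : (0:ℝ) ≤ r * e * Q)]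
    have hexp : r * e * ((ℓ^2)⁻¹ * P + ℓ^2 * Q) = r * e * ((ℓ^2)⁻¹ * P) + r * e * (ℓ^2 * Q) := by
      ring
    linarith [h1, h2, h3, h4, hexp.le, hexp.ge]
  -- conclusions
  have hγ : (0:ℝ) < 1 - r := by linarith
  have hPe : (0:ℝ) ≤ P / e := by positivity
  have hQ3 : (0:ℝ) ≤ e^3 * Q := by positivity
  have hMfin : (1-r)/2 * (P/e) + (1-r) * (e^3*Q) ≤ M := by linarith
  have hM0 : 0 ≤ M := by nlinarith
  have hPmain : (1-r) * (P/e) ≤ 2*M := by nlinarith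
  have hQmain : (1-r) * (e^3*Q) ≤ 2*M := by nlinarith
  have hPconc : P/e ≤ 2*M/(1-r) := by
    rw [le_div_iff₀ hγ]; linarith [hPmain]
  have hQconc : e^3*Q ≤ 2*M/(1-r) := by
    rw [le_div_iff₀ hγ]; linarith [hQmain]
  refine ⟨?_, hQconc, ?_, hM0⟩
  · have := mul_le_mul_of_nonneg_right hPconc (le_of_lt he)
    have heq : P/e*e = P := by field_simp
    linarith [this, heq.le, heq.ge]
  · have h5 : k * (e * T) ≤ 2 * (2*M/(1-r)) := by
      have : k * e * T ≤ (1+r)/2 * (P/e) + r * (e^3*Q) := hkey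
      nlinarith [hPconc, hQconc, hPe, hQ3]
    have h6 : e * T ≤ 2 * (2*M/(1-r)) / k := by
      rw [le_div_iff₀ hkpos]
      nlinarith [h5]
    have h7 : 2 * (2*M/(1-r)) / k = (2/k) * (2*M/(1-r)) := by ring
    linarith [h6, h7.le, h7.ge]

set_option maxHeartbeats 1000000 in
lemma coercivity
    (W : ℝ → ℝ) (hWcont : Continuous W) (hWnonneg : ∀ s, 0 ≤ W s)
    (k₀ : ℝ) (hk₀pos : 0 < k₀)
    (hk₀ : ∀ a b : ℝ, a < b → ∀ u u' u'' : ℝ → ℝ, W22On u u' u'' a b →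
      k₀ * ∫ x in a..b, (u' x) ^ 2 ≤
        ((b - a) ^ 2)⁻¹ * (∫ x in a..b, W (u x)) +
          (b - a) ^ 2 * ∫ x in a..b, (u'' x) ^ 2)
    (k : ℝ) (hkpos : 0 < k) (hk : k < k₀)
    (α β : ℝ) (hαβ : α < β) (e : ℝ) (he : 0 < e)
    (u u' u'' : ℝ → ℝ) (hu : W22On u u' u'' α β)
    (hcond : (k/k₀) * (1 + e/(β-α))^2 ≤ (1 + k/k₀)/2)
    (M : ℝ)
    (hM : (∫ x in α..β, (W (u x) / e - k * e * (u' x) ^ 2 + e ^ 3 * (u'' x) ^ 2)) ≤ M) :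
    (∫ x in α..β, W (u x)) ≤ (2 * M / (1 - k/k₀)) * e ∧
    e ^ 3 * (∫ x in α..β, (u'' x) ^ 2) ≤ 2 * M / (1 - k/k₀) ∧
    e * (∫ x in α..β, (u' x) ^ 2) ≤ (2/k) * (2 * M / (1 - k/k₀)) ∧
    0 ≤ M := by
  set r : ℝ := k / k₀ with hr
  have hr0 : 0 < r := div_pos hkpos hk₀pos
  have hr1 : r < 1 := (div_lt_one hk₀pos).2 hk
  have hβα : 0 < β - α := by linarith
  set n : ℕ := ⌈(β - α) / e⌉₊ with hn
  have hn0 : 0 < n := Nat.ceil_pos.2 (div_pos hβα he)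
  have hn0' : (0:ℝ) < n := by exact_mod_cast hn0
  set ℓ : ℝ := (β - α) / n with hℓ
  have hℓpos : 0 < ℓ := div_pos hβα hn0'
  have hnℓ : (n:ℝ) * ℓ = β - α := by rw [hℓ]; field_simp [hn0'.ne']
  have hℓe : ℓ ≤ e := by
    rw [hℓ, div_le_iff₀ hn0']
    have h1 : (β - α) / e ≤ (n:ℝ) := Nat.le_ceil _
    calc β - α = ((β - α)/e) * e := by field_simp
      _ ≤ (n:ℝ) * e := by nlinarith
      _ = e * n := by ring
  have hne : (n:ℝ) * e ≤ (β - α) + e := by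
    have h1 : (n:ℝ) < (β - α)/e + 1 := by
      have := Nat.ceil_lt_add_one (le_of_lt (div_pos hβα he))
      exact_mod_cast this
    have : (n:ℝ) * e ≤ ((β - α)/e + 1) * e := by nlinarith
    calc (n:ℝ) * e ≤ ((β - α)/e + 1) * e := this
      _ = (β - α) + e := by field_simp
  set κ : ℝ := 1 + e/(β-α) with hκdef
  have hκpos : 0 < κ := by positivity
  have hκ : e ≤ ℓ * κ := by
    have h9 : ℓ * κ = ((β - α) + e) / n := by
      rw [hℓ, hκdef]; field_simp
    rw [h9, le_div_iff₀ hn0']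
    linarith [hne]
  -- partition points
  set a : ℕ → ℝ := fun i => α + i * ℓ with hadef
  have ha0 : a 0 = α := by simp [hadef]
  have han : a n = β := by simp [hadef]; linarith [hnℓ]
  have hamono : ∀ i j : ℕ, i ≤ j → a i ≤ a j := by
    intro i j hij
    simp only [hadef]
    have : (i:ℝ) ≤ j := by exact_mod_cast hij
    nlinarith
  have halb : ∀ i : ℕ, i ≤ n → α ≤ a i ∧ a i ≤ β := by
    intro i hi
    constructor
    · rw [← ha0]; exact hamono 0 i (Nat.zero_le i)
    · rw [← han]; exact hamono i n hi
  have hstep : ∀ i : ℕ, a (i+1) - a i = ℓ := by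
    intro i; simp only [hadef]; push_cast; ring
  -- integrability
  have hucont := hu.continuousOn
  have hWint : IntegrableOn (fun x => W (u x)) (Set.Icc α β) :=
    (hWcont.comp_continuousOn hucont).integrableOn_Icc
  have hu'int : IntegrableOn (fun x => (u' x)^2) (Set.Icc α β) :=
    (hu.2.1.pow 2).integrableOn_Icc
  have hu''int : IntegrableOn (fun x => (u'' x)^2) (Set.Icc α β) := hu.2.2.2.1
  have hII : ∀ f : ℝ → ℝ, IntegrableOn f (Set.Icc α β) → ∀ x y : ℝ, α ≤ x → x ≤ y → y ≤ β →
      IntervalIntegrable f volume x y := by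
    intro f hf x y hx hxy hy
    exact (hf.mono_set (by rw [Set.uIcc_of_le hxy]; exact Set.Icc_subset_Icc hx hy)).intervalIntegrable
  have hadj : ∀ f : ℝ → ℝ, IntegrableOn f (Set.Icc α β) →
      (∑ i ∈ Finset.range n, ∫ x in (a i)..(a (i+1)), f x) = ∫ x in α..β, f x := by
    intro f hf
    rw [intervalIntegral.sum_integral_adjacent_intervals (fun i hi => ?_), ha0, han]
    exact hII f hf _ _ (halb i (le_of_lt hi)).1 (by linarith [hstep i, hℓpos])
      (halb (i+1) hi).2
  set P : ℝ := ∫ x in α..β, W (u x) with hP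
  set T : ℝ := ∫ x in α..β, (u' x)^2 with hT
  set Q : ℝ := ∫ x in α..β, (u'' x)^2 with hQ
  have hPpos : 0 ≤ P := intervalIntegral.integral_nonneg (le_of_lt hαβ) (fun x _ => hWnonneg _)
  have hTpos : 0 ≤ T := intervalIntegral.integral_nonneg (le_of_lt hαβ) (fun x _ => sq_nonneg _)
  have hQpos : 0 ≤ Q := intervalIntegral.integral_nonneg (le_of_lt hαβ) (fun x _ => sq_nonneg _)
  -- apply hk₀ on each piece and sum
  have hsumineq : k₀ * T ≤ (ℓ^2)⁻¹ * P + ℓ^2 * Q := by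
    have hpiece : ∀ i ∈ Finset.range n,
        k₀ * ∫ x in (a i)..(a (i+1)), (u' x)^2 ≤
          (ℓ^2)⁻¹ * (∫ x in (a i)..(a (i+1)), W (u x)) +
            ℓ^2 * ∫ x in (a i)..(a (i+1)), (u'' x)^2 := by
      intro i hi
      rw [Finset.mem_range] at hi
      have hlt : a i < a (i+1) := by linarith [hstep i, hℓpos]
      have hW22 : W22On u u' u'' (a i) (a (i+1)) :=
        hu.mono (halb i (le_of_lt hi)).1 (halb (i+1) hi).2
      have := hk₀ (a i) (a (i+1)) hlt u u' u'' hW22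
      rwa [hstep i] at this
    have hsum := Finset.sum_le_sum hpiece
    rw [← Finset.mul_sum, hadj _ hu'int] at hsum
    calc k₀ * T ≤ ∑ i ∈ Finset.range n,
        ((ℓ^2)⁻¹ * (∫ x in (a i)..(a (i+1)), W (u x)) +
          ℓ^2 * ∫ x in (a i)..(a (i+1)), (u'' x)^2) := hsum
      _ = (ℓ^2)⁻¹ * P + ℓ^2 * Q := by
          rw [Finset.sum_add_distrib, ← Finset.mul_sum, ← Finset.mul_sum,
            hadj _ hWint, hadj _ hu''int]
  -- split the energy integral
  have hIW : IntervalIntegrable (fun x => W (u x) / e) volume α β := by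
    have := hII _ hWint α β le_rfl (le_of_lt hαβ) le_rfl
    exact this.div_const e
  have hIT : IntervalIntegrable (fun x => k * e * (u' x)^2) volume α β := by
    have := hII _ hu'int α β le_rfl (le_of_lt hαβ) le_rfl
    exact this.const_mul _
  have hIQ : IntervalIntegrable (fun x => e^3 * (u'' x)^2) volume α β := by
    have := hII _ hu''int α β le_rfl (le_of_lt hαβ) le_rfl
    exact this.const_mul _
  have hsplit : (∫ x in α..β, (W (u x) / e - k * e * (u' x) ^ 2 + e ^ 3 * (u'' x) ^ 2))
      = P/e - k*e*T + e^3*Q := by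
    rw [intervalIntegral.integral_add (hIW.sub hIT) hIQ, intervalIntegral.integral_sub hIW hIT,
      intervalIntegral.integral_div, intervalIntegral.integral_const_mul,
      intervalIntegral.integral_const_mul]
  rw [hsplit] at hM
  exact coerc_arith hr hr0 hr1 he hℓpos hℓe hκ hcond hk₀pos hkpos hPpos hTpos hQpos hsumineq hM

end Aux

set_option maxHeartbeats 4000000 in
/-- Compactness: let `0 < k < k₀`, `I = (α,β)`, `ε_j → 0⁺`, and `(u_j) ⊂ W^{2,2}(I)` with
`sup_j F^k_{ε_j}(u_j, I) < +∞`.  Then a subsequence of `(u_j)` converges in `L¹(I)`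
to a function `v ∈ BV(I; {−1,1})`. -/

theorem compactness_Fk
    (W : ℝ → ℝ) (hWcont : Continuous W) (hWnonneg : ∀ s, 0 ≤ W s)
    (hWzero : ∀ s, W s = 0 ↔ s = 1 ∨ s = -1)
    (c : ℝ) (hc : 0 < c)
    (hWgp : ∀ s, 0 ≤ s → c * (s - 1) ^ 2 ≤ W s)
    (hWgn : ∀ s, s ≤ 0 → c * (s + 1) ^ 2 ≤ W s)
    (k₀ : ℝ) (hk₀pos : 0 < k₀)
    (hk₀ : ∀ a b : ℝ, a < b → ∀ u u' u'' : ℝ → ℝ, W22On u u' u'' a b →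
      k₀ * ∫ x in a..b, (u' x) ^ 2 ≤
        ((b - a) ^ 2)⁻¹ * (∫ x in a..b, W (u x)) +
          (b - a) ^ 2 * ∫ x in a..b, (u'' x) ^ 2)
    (k : ℝ) (hkpos : 0 < k) (hk : k < k₀)
    (α β : ℝ) (hαβ : α < β)
    (ε : ℕ → ℝ) (hεpos : ∀ j, 0 < ε j) (hεlim : Tendsto ε atTop (nhds 0))
    (u u' u'' : ℕ → ℝ → ℝ) (hu : ∀ j, W22On (u j) (u' j) (u'' j) α β)
    (M : ℝ)
    (hM : ∀ j, (∫ x in α..β,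
        (W (u j x) / ε j - k * ε j * (u' j x) ^ 2 + (ε j) ^ 3 * (u'' j x) ^ 2)) ≤ M) :
    ∃ φ : ℕ → ℕ, StrictMono φ ∧
      ∃ v : ℝ → ℝ, BoundedVariationOn v (Set.Ioo α β) ∧
        (∀ᵐ x ∂(MeasureTheory.volume.restrict (Set.Ioo α β)), v x = 1 ∨ v x = -1) ∧
        Tendsto (fun m => ∫ x in α..β, |u (φ m) x - v x|) atTop (nhds 0) := by
  classical
  set r : ℝ := k / k₀ with hr
  have hr0 : 0 < r := div_pos hkpos hk₀pos
  have hr1 : r < 1 := (div_lt_one hk₀pos).2 hk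
  have hβα : (0:ℝ) < β - α := by linarith
  -- tail index for the coercivity condition
  have hcontf : Continuous (fun e : ℝ => r * (1 + e/(β-α))^2) := by
    apply continuous_const.mul
    apply Continuous.pow
    exact continuous_const.add (continuous_id.div_const _)
  have hcondlim : Tendsto (fun e : ℝ => r * (1 + e/(β-α))^2) (nhds 0) (nhds r) := by
    have h0 := hcontf.tendsto 0
    simpa using h0
  have hev : ∀ᶠ j in atTop, r * (1 + (ε j)/(β-α))^2 ≤ (1+r)/2 :=
    (hcondlim.comp hεlim).eventually (eventually_le_nhds (by linarith : r < (1+r)/2))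
  obtain ⟨N₀, hN₀⟩ := eventually_atTop.1 hev
  set C : ℝ := 2 * M / (1 - r) with hC
  have hco : ∀ j, N₀ ≤ j →
      (∫ x in α..β, W (u j x)) ≤ C * ε j ∧
      (ε j) ^ 3 * (∫ x in α..β, (u'' j x)^2) ≤ C ∧
      ε j * (∫ x in α..β, (u' j x)^2) ≤ (2/k) * C ∧ 0 ≤ M := by
    intro j hj
    exact coercivity W hWcont hWnonneg k₀ hk₀pos hk₀ k hkpos hk α β hαβ (ε j) (hεpos j)
      (u j) (u' j) (u'' j) (hu j) (hN₀ j hj) M (hM j)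
  have hM0 : 0 ≤ M := (hco N₀ le_rfl).2.2.2
  have hC0 : 0 ≤ C := by
    rw [hC]; apply div_nonneg (by linarith) (by linarith)
  -- the auxiliary functions g, G, d
  set g : ℝ → ℝ := fun t => max 0 (min (Real.sqrt (W t)) (min 1 (3 - |t|))) with hgdef
  have hgcont : Continuous g := by
    apply continuous_const.max
    exact (hWcont.sqrt).min (continuous_const.min (continuous_const.sub continuous_abs))
  have hg0 : ∀ t, 0 ≤ g t := fun t => le_max_left _ _
  have hg1 : ∀ t, g t ≤ 1 :=
    fun t => max_le (by norm_num) (le_trans (min_le_right _ _) (min_le_left _ _))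
  have hgsqrt : ∀ t, g t ≤ Real.sqrt (W t) :=
    fun t => max_le (Real.sqrt_nonneg _) (min_le_left _ _)
  set G : ℝ → ℝ := fun s => ∫ t in (0:ℝ)..s, g t with hGdef
  have hGsub : ∀ s t : ℝ, G s - G t = ∫ x in t..s, g x := by
    intro s t
    exact intervalIntegral.integral_interval_sub_left (hgcont.intervalIntegrable _ _)
      (hgcont.intervalIntegrable _ _)
  have hGlip : ∀ s t : ℝ, |G s - G t| ≤ |s - t| := by
    intro s t
    rw [hGsub]
    have h1 := intervalIntegral.norm_integral_le_of_norm_le_const (C := 1)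
      (f := g) (a := t) (b := s) ?_
    · rw [Real.norm_eq_abs] at h1
      calc |∫ x in t..s, g x| ≤ 1 * |s - t| := h1
        _ = |s - t| := one_mul _
    · intro x _
      rw [Real.norm_eq_abs, abs_of_nonneg (hg0 x)]
      exact hg1 x
  have hG0 : G 0 = 0 := intervalIntegral.integral_same
  have hGbd : ∀ s, |G s| ≤ 3 := by
    have hsmall : ∀ s : ℝ, |s| ≤ 3 → |G s| ≤ 3 := by
      intro s hs
      have := hGlip s 0
      rw [hG0, sub_zero, sub_zero] at this
      linarith
    intro s
    rcases le_total (|s|) 3 with hs | hs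
    · exact hsmall s hs
    rcases le_total 0 s with hs0 | hs0
    · have hs3 : (3:ℝ) ≤ s := by
        rw [abs_of_nonneg hs0] at hs; linarith
      have hz : G s - G 3 = 0 := by
        rw [hGsub]
        rw [intervalIntegral.integral_congr (g := fun _ => (0:ℝ)) ?_]
        · simp
        · intro x hx
          rw [Set.uIcc_of_le hs3] at hx
          apply le_antisymm _ (hg0 x)
          apply max_le le_rfl
          have hx3 : (3:ℝ) ≤ x := hx.1
          have : 3 - |x| ≤ 0 := by
            rw [abs_of_nonneg (by linarith : (0:ℝ) ≤ x)]; linarith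
          calc min (Real.sqrt (W x)) (min 1 (3 - |x|)) ≤ 3 - |x| :=
                le_trans (min_le_right _ _) (min_le_right _ _)
            _ ≤ 0 := this
      have h3 := hsmall 3 (by norm_num)
      have : G s = G 3 := by linarith
      rw [this]; exact h3
    · have hs3 : s ≤ -3 := by
        rw [abs_of_nonpos hs0] at hs; linarith
      have hz : G s - G (-3) = 0 := by
        rw [hGsub]
        rw [intervalIntegral.integral_congr (g := fun _ => (0:ℝ)) ?_]
        · simp
        · intro x hx
          rw [Set.uIcc_of_ge (by linarith : s ≤ -3)] at hx
          apply le_antisymm _ (hg0 x)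
          apply max_le le_rfl
          have hx3 : x ≤ -3 := hx.2
          have : 3 - |x| ≤ 0 := by
            rw [abs_of_nonpos (by linarith : x ≤ 0)]; linarith
          calc min (Real.sqrt (W x)) (min 1 (3 - |x|)) ≤ 3 - |x| :=
                le_trans (min_le_right _ _) (min_le_right _ _)
            _ ≤ 0 := this
      have h3 := hsmall (-3) (by norm_num)
      have : G s = G (-3) := by linarith
      rw [this]; exact h3
  set A : ℝ := G (-1) with hAdef
  set B : ℝ := G 1 with hBdef
  have hABlt : A < B := by
    have h1 : B - A = ∫ x in (-1:ℝ)..1, g x := hGsub 1 (-1)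
    have h2 : 0 < ∫ x in (-1:ℝ)..1, g x := by
      apply intervalIntegral.intervalIntegral_pos_of_pos_on (hgcont.intervalIntegrable _ _)
        ?_ (by norm_num)
      intro x hx
      have hW : 0 < W x := by
        rcases lt_or_eq_of_le (hWnonneg x) with h | h
        · exact h
        · exfalso
          have := (hWzero x).1 h.symm
          rcases this with h1 | h1 <;> rw [h1] at hx <;>
            simp only [Set.mem_Ioo] at hx <;> linarith [hx.1, hx.2]
      have hx1 : |x| < 1 := by
        rw [abs_lt]; exact ⟨hx.1, hx.2⟩
      have hmin : 0 < min (Real.sqrt (W x)) (min 1 (3 - |x|)) := by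
        apply lt_min (Real.sqrt_pos.2 hW)
        apply lt_min (by norm_num)
        linarith
      exact lt_max_of_lt_right hmin
    linarith
  set d : ℝ → ℝ := fun s => min |s - 1| |s + 1| with hddef
  have hdnonneg : ∀ s, 0 ≤ d s := fun s => le_min (abs_nonneg _) (abs_nonneg _)
  have hdcont : Continuous d :=
    ((continuous_id.sub continuous_const).abs).min ((continuous_id.add continuous_const).abs)
  have hdW : ∀ s, c * (d s)^2 ≤ W s := by
    intro s
    rcases le_total 0 s with hs | hs
    · have h1 : d s ≤ |s - 1| := min_le_left _ _
      have h2 : (d s)^2 ≤ (s-1)^2 := by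
        rw [← sq_abs (s-1)]
        exact pow_le_pow_left₀ (hdnonneg s) h1 2
      nlinarith [hWgp s hs]
    · have h1 : d s ≤ |s + 1| := min_le_right _ _
      have h2 : (d s)^2 ≤ (s+1)^2 := by
        rw [← sq_abs (s+1)]
        exact pow_le_pow_left₀ (hdnonneg s) h1 2
      nlinarith [hWgn s hs]
  have hGA : ∀ s, |G s - A| ≤ |s + 1| := by
    intro s
    have := hGlip s (-1)
    rw [hAdef]
    rw [sub_neg_eq_add] at this
    exact this
  have hGB : ∀ s, |G s - B| ≤ |s - 1| := fun s => hGlip s 1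
  -- variation bound for (G ∘ u j)
  set C₃ : ℝ := (C + (2/k)*C)/2 with hC₃def
  have hC₃0 : 0 ≤ C₃ := by
    rw [hC₃def]
    have : 0 ≤ (2/k) * C := mul_nonneg (by positivity) hC0
    linarith
  have hucont : ∀ j, ContinuousOn (u j) (Set.Icc α β) := fun j => (hu j).continuousOn
  have hvar : ∀ j, N₀ ≤ j →
      eVariationOn (fun x => G (u j x)) (Set.Ioo α β) ≤ ENNReal.ofReal C₃ := by
    intro j hj
    have he := hεpos j
    have hWub := (hco j hj).1
    have hTub := (hco j hj).2.2.1
    have hrep := comp_antideriv hgcont (hu j).1 (hu j).2.1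
    have hcont2 : ContinuousOn (fun t => g (u j t) * u' j t) (Set.Icc α β) :=
      (hgcont.comp_continuousOn (hucont j)).mul (hu j).2.1
    refine le_trans (evar_le_integral (le_of_lt hαβ) hcont2.integrableOn_Icc ?_) ?_
    · intro x hx y hy
      exact hrep x hx y hy
    apply ENNReal.ofReal_le_ofReal
    set e : ℝ := ε j
    have hbnd : ∀ t ∈ Set.Icc α β, |g (u j t) * u' j t| ≤
        (1/(2*e)) * W (u j t) + (e/2) * (u' j t)^2 := by
      intro t _
      set s := Real.sqrt (W (u j t)) with hsdef
      have hs0 : 0 ≤ s := Real.sqrt_nonneg _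
      have hs2 : s^2 = W (u j t) := Real.sq_sqrt (hWnonneg _)
      have h1 : |g (u j t) * u' j t| ≤ s * |u' j t| := by
        rw [abs_mul, abs_of_nonneg (hg0 _)]
        exact mul_le_mul_of_nonneg_right (hgsqrt _) (abs_nonneg _)
      have h2 : 2 * e * (s * |u' j t|) ≤ s^2 + e^2 * (u' j t)^2 := by
        nlinarith [sq_nonneg (s - e * |u' j t|), sq_abs (u' j t)]
      have h3 : s * |u' j t| ≤ (1/(2*e)) * (s^2 + e^2 * (u' j t)^2) := by
        have h4 := mul_le_mul_of_nonneg_left h2 (by positivity : (0:ℝ) ≤ 1/(2*e))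
        have h5 : 1/(2*e) * (2 * e * (s * |u' j t|)) = s * |u' j t| := by
          field_simp
        linarith [h4, h5.le, h5.ge]
      have h6 : (1/(2*e)) * (s^2 + e^2 * (u' j t)^2)
          = (1/(2*e)) * s^2 + (e/2) * (u' j t)^2 := by
        field_simp
      rw [h6, hs2] at h3
      linarith
    have hint1 : IntervalIntegrable (fun t => |g (u j t) * u' j t|) volume α β :=
      (hcont2.abs).intervalIntegrable_of_Icc (le_of_lt hαβ)
    have hIW : IntervalIntegrable (fun t => W (u j t)) volume α β :=
      (show ContinuousOn (fun t => W (u j t)) (Set.Icc α β) from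
        hWcont.comp_continuousOn (hucont j)).intervalIntegrable_of_Icc (le_of_lt hαβ)
    have hIT : IntervalIntegrable (fun t => (u' j t)^2) volume α β :=
      (show ContinuousOn (fun t => (u' j t)^2) (Set.Icc α β) from
        (hu j).2.1.pow 2).intervalIntegrable_of_Icc (le_of_lt hαβ)
    have hint2 : IntervalIntegrable
        (fun t => (1/(2*e)) * W (u j t) + (e/2) * (u' j t)^2) volume α β :=
      (hIW.const_mul _).add (hIT.const_mul _)
    calc (∫ t in α..β, |g (u j t) * u' j t|)
        ≤ ∫ t in α..β, ((1/(2*e)) * W (u j t) + (e/2) * (u' j t)^2) :=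
          intervalIntegral.integral_mono_on (le_of_lt hαβ) hint1 hint2 hbnd
      _ = (1/(2*e)) * (∫ t in α..β, W (u j t)) + (e/2) * (∫ t in α..β, (u' j t)^2) := by
          rw [intervalIntegral.integral_add (hIW.const_mul _) (hIT.const_mul _),
            intervalIntegral.integral_const_mul, intervalIntegral.integral_const_mul]
      _ ≤ C₃ := by
          have hP0 : 0 ≤ ∫ t in α..β, W (u j t) :=
            intervalIntegral.integral_nonneg (le_of_lt hαβ) (fun x _ => hWnonneg _)
          have h7 : (1/(2*e)) * (∫ t in α..β, W (u j t)) ≤ (1/(2*e)) * (C * e) :=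
            mul_le_mul_of_nonneg_left hWub (by positivity)
          have h8 : (1/(2*e)) * (C * e) = C/2 := by field_simp
          have h9 : (e/2) * (∫ t in α..β, (u' j t)^2)
              = (1/2) * (e * (∫ t in α..β, (u' j t)^2)) := by ring
          have h10 : (1/2) * (e * (∫ t in α..β, (u' j t)^2)) ≤ (1/2) * ((2/k) * C) :=
            mul_le_mul_of_nonneg_left hTub (by norm_num)
          rw [hC₃def]
          linarith [h7, h8.le, h8.ge, h9.le, h9.ge, h10]
  -- BV decomposition
  have hGdiff : Differentiable ℝ G := fun y => (hasDerivAt_primitive hgcont y).differentiableAt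
  have hGc : Continuous G := hGdiff.continuous
  set s₀ : Set ℝ := Set.Ioo α β with hs₀def
  have hx₀ : (α+β)/2 ∈ s₀ := ⟨by linarith, by linarith⟩
  set f : ℕ → ℝ → ℝ := fun j x => G (u j x) with hfdef
  have hBV : ∀ j, N₀ ≤ j → LocallyBoundedVariationOn (f j) s₀ := by
    intro j hj
    have h1 : BoundedVariationOn (f j) s₀ := ((hvar j hj).trans_lt ENNReal.ofReal_lt_top).ne
    exact h1.locallyBoundedVariationOn
  set p : ℕ → ℝ → ℝ := fun j x => variationOnFromTo (f j) s₀ ((α+β)/2) x with hpdef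
  have hpmono : ∀ j, N₀ ≤ j → MonotoneOn (p j) s₀ :=
    fun j hj => variationOnFromTo.monotoneOn (hBV j hj) hx₀
  have hpbd : ∀ j, N₀ ≤ j → ∀ x ∈ s₀, |p j x| ≤ C₃ := by
    intro j hj x _
    have key : ∀ a b : ℝ, a ≤ b → (eVariationOn (f j) (s₀ ∩ Set.Icc a b)).toReal ≤ C₃ := by
      intro a b _
      have h1 : eVariationOn (f j) (s₀ ∩ Set.Icc a b) ≤ ENNReal.ofReal C₃ :=
        le_trans (eVariationOn.mono _ Set.inter_subset_left) (hvar j hj)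
      calc (eVariationOn (f j) (s₀ ∩ Set.Icc a b)).toReal ≤ (ENNReal.ofReal C₃).toReal :=
            ENNReal.toReal_mono ENNReal.ofReal_ne_top h1
        _ = C₃ := ENNReal.toReal_ofReal hC₃0
    show |variationOnFromTo (f j) s₀ ((α+β)/2) x| ≤ C₃
    rcases le_total ((α+β)/2) x with hab | hba
    · rw [variationOnFromTo.eq_of_le _ _ hab, abs_of_nonneg ENNReal.toReal_nonneg]
      exact key _ _ hab
    · rw [variationOnFromTo.eq_of_ge _ _ hba, abs_neg, abs_of_nonneg ENNReal.toReal_nonneg]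
      exact key _ _ hba
  set q : ℕ → ℝ → ℝ := fun j x => p j x - f j x with hqdef
  have hqmono : ∀ j, N₀ ≤ j → MonotoneOn (q j) s₀ := by
    intro j hj
    have h1 := variationOnFromTo.sub_self_monotoneOn (hBV j hj) hx₀
    intro a ha b hb hab
    exact h1 ha hb hab
  have hfbd : ∀ j x, |f j x| ≤ 3 := fun j x => hGbd _
  have hqbd : ∀ j, N₀ ≤ j → ∀ x ∈ s₀, |q j x| ≤ C₃ + 3 := by
    intro j hj x hx
    calc |q j x| = |p j x + -(f j x)| := by
          show |p j x - f j x| = _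
          rw [sub_eq_add_neg]
      _ ≤ |p j x| + |-(f j x)| := abs_add_le _ _
      _ = |p j x| + |f j x| := by rw [abs_neg]
      _ ≤ C₃ + 3 := add_le_add (hpbd j hj x hx) (hfbd j x)
  -- Helly selections
  obtain ⟨ψ₁, hψ₁, Pf, hPfmono, hPfbd, hPfae⟩ :=
    helly_mono hαβ hC₃0 (fun j => p (j + N₀))
      (fun j => hpmono (j + N₀) (Nat.le_add_left _ _))
      (fun j x hx => hpbd (j + N₀) (Nat.le_add_left _ _) x hx)
  obtain ⟨ψ₂, hψ₂, Qf, hQfmono, hQfbd, hQfae⟩ :=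
    helly_mono hαβ (by linarith : (0:ℝ) ≤ C₃ + 3) (fun m => q (ψ₁ m + N₀))
      (fun m => hqmono _ (Nat.le_add_left _ _))
      (fun m x hx => hqbd _ (Nat.le_add_left _ _) x hx)
  set φ : ℕ → ℕ := fun m => ψ₁ (ψ₂ m) + N₀ with hφdef
  have hφmono : StrictMono φ := by
    intro a b h
    have := hψ₁ (hψ₂ h)
    simp only [hφdef]
    omega
  set w : ℝ → ℝ := fun x => Pf x - Qf x with hwdef
  have hwmeas : Measurable w := (hPfmono.measurable).sub (hQfmono.measurable)
  set Kw : ℝ := C₃ + (C₃ + 3) with hKwdef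
  have hwbd : ∀ x, |w x| ≤ Kw := by
    intro x
    calc |w x| = |Pf x + -(Qf x)| := by
          show |Pf x - Qf x| = _
          rw [sub_eq_add_neg]
      _ ≤ |Pf x| + |-(Qf x)| := abs_add_le _ _
      _ = |Pf x| + |Qf x| := by rw [abs_neg]
      _ ≤ Kw := add_le_add (hPfbd x) (hQfbd x)
  -- a.e. convergence of f (φ m) to w
  have hfae : ∀ᵐ x ∂(volume.restrict s₀), Tendsto (fun m => f (φ m) x) atTop (nhds (w x)) := by
    filter_upwards [hPfae, hQfae] with x h1 h2
    have h1' : Tendsto (fun m => p (ψ₁ (ψ₂ m) + N₀) x) atTop (nhds (Pf x)) :=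
      h1.comp (hψ₂.tendsto_atTop)
    have h3 := h1'.sub h2
    have h4 : (fun m => p (ψ₁ (ψ₂ m) + N₀) x - q (ψ₁ (ψ₂ m) + N₀) x)
        = fun m => f (φ m) x := by
      funext m
      simp only [hqdef, hφdef]
      ring
    rw [h4] at h3
    exact h3
  -- dominated convergence for the G-part
  haveI hfin : IsFiniteMeasure (volume.restrict s₀) := by
    constructor
    rw [Measure.restrict_apply_univ]
    exact measure_Ioo_lt_top
  have humeas : ∀ j, AEStronglyMeasurable (u j) (volume.restrict s₀) :=
    fun j => ((hucont j).mono Set.Ioo_subset_Icc_self).aestronglyMeasurable measurableSet_Ioo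
  have hfmeas : ∀ j, AEStronglyMeasurable (f j) (volume.restrict s₀) :=
    fun j => hGc.comp_aestronglyMeasurable (humeas j)
  have hfwint : ∀ j, Integrable (fun x => |f j x - w x|) (volume.restrict s₀) := by
    intro j
    apply Integrable.mono' (integrable_const (3 + Kw))
      (((hfmeas j).sub hwmeas.aestronglyMeasurable).norm)
    filter_upwards with x
    simp only [Real.norm_eq_abs, abs_abs]
    calc |f j x - w x| = |f j x + -(w x)| := by rw [sub_eq_add_neg]
      _ ≤ |f j x| + |-(w x)| := abs_add_le _ _
      _ = |f j x| + |w x| := by rw [abs_neg]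
      _ ≤ 3 + Kw := add_le_add (hfbd j x) (hwbd x)
  have hL1G : Tendsto (fun m => ∫ x in s₀, |f (φ m) x - w x|) atTop (nhds 0) := by
    have h0 : (0:ℝ) = ∫ x in s₀, (0:ℝ) := by simp
    rw [h0]
    apply MeasureTheory.tendsto_integral_of_dominated_convergence (fun _ => 3 + Kw)
    · exact fun m => ((hfmeas (φ m)).sub hwmeas.aestronglyMeasurable).norm
    · exact integrable_const _
    · intro m
      filter_upwards with x
      simp only [Real.norm_eq_abs, abs_abs]
      calc |f (φ m) x - w x| = |f (φ m) x + -(w x)| := by rw [sub_eq_add_neg]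
        _ ≤ |f (φ m) x| + |-(w x)| := abs_add_le _ _
        _ = |f (φ m) x| + |w x| := by rw [abs_neg]
        _ ≤ 3 + Kw := add_le_add (hfbd _ x) (hwbd x)
    · filter_upwards [hfae] with x hx
      have h5 := hx.sub (tendsto_const_nhds (x := w x))
      rw [sub_self] at h5
      have h6 := h5.abs
      rw [abs_zero] at h6
      exact h6
  -- L¹ convergence of the distance to the wells
  have hdint : ∀ j, IntegrableOn (fun x => d (u j x)) s₀ := fun j =>
    ((hdcont.comp_continuousOn (hucont j)).integrableOn_Icc).mono_set Set.Ioo_subset_Icc_self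
  have hWuint : ∀ j, IntegrableOn (fun x => W (u j x)) s₀ := fun j =>
    ((hWcont.comp_continuousOn (hucont j)).integrableOn_Icc).mono_set Set.Ioo_subset_Icc_self
  have hWIoo : ∀ j, N₀ ≤ j → (∫ x in s₀, W (u j x)) ≤ C * ε j := by
    intro j hj
    have h1 : (∫ x in α..β, W (u j x)) = ∫ x in s₀, W (u j x) := by
      rw [intervalIntegral.integral_of_le (le_of_lt hαβ),
        MeasureTheory.integral_Ioc_eq_integral_Ioo]
    rw [← h1]
    exact (hco j hj).1
  have hdb : ∀ j, N₀ ≤ j → ∀ δ : ℝ, 0 < δ →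
      (∫ x in s₀, d (u j x)) ≤ δ * (β - α) + (C * ε j)/(c * δ) := by
    intro j hj δ hδ
    have hptw : ∀ x ∈ s₀, d (u j x) ≤ δ + W (u j x)/(c*δ) := by
      intro x _
      have h1 := hdW (u j x)
      have h2 : d (u j x) ≤ δ + (d (u j x))^2/δ := by
        rcases le_total (d (u j x)) δ with h | h
        · linarith [div_nonneg (sq_nonneg (d (u j x))) (le_of_lt hδ)]
        · have h3 : d (u j x) ≤ (d (u j x))^2/δ := by
            rw [le_div_iff₀ hδ]
            nlinarith [hdnonneg (u j x)]
          linarith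
      have h3 : (d (u j x))^2/δ ≤ W (u j x)/(c*δ) := by
        rw [div_le_div_iff₀ hδ (by positivity)]
        nlinarith [h1, hc]
      linarith
    have hrhs : IntegrableOn (fun x => δ + W (u j x)/(c*δ)) s₀ :=
      (integrable_const _).add ((hWuint j).div_const _)
    calc (∫ x in s₀, d (u j x)) ≤ ∫ x in s₀, (δ + W (u j x)/(c*δ)) :=
          setIntegral_mono_on (hdint j) hrhs measurableSet_Ioo hptw
      _ = δ * (β - α) + (∫ x in s₀, W (u j x))/(c*δ) := by
          rw [MeasureTheory.integral_add (integrable_const _) ((hWuint j).div_const _),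
            MeasureTheory.integral_div, setIntegral_const, smul_eq_mul, hs₀def,
            Real.volume_real_Ioo_of_le (by linarith : α ≤ β)]
          ring
      _ ≤ δ * (β - α) + (C * ε j)/(c * δ) := by
          have := hWIoo j hj
          have h4 : (∫ x in s₀, W (u j x))/(c*δ) ≤ (C * ε j)/(c*δ) :=
            (div_le_div_iff_of_pos_right (by positivity)).2 this
          linarith [h4]
  have hεφ : Tendsto (fun m => ε (φ m)) atTop (nhds 0) := hεlim.comp (hφmono.tendsto_atTop)
  have hL1d : Tendsto (fun m => ∫ x in s₀, d (u (φ m) x)) atTop (nhds 0) := by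
    rw [Metric.tendsto_atTop]
    intro η hη
    set δ : ℝ := η/(2*(β-α)+2) with hδdef
    have hδ : 0 < δ := by positivity
    have hε1 : ∀ᶠ m in atTop, C * ε (φ m) < (η/2) * (c*δ) := by
      have h5 : Tendsto (fun m => C * ε (φ m)) atTop (nhds 0) := by
        simpa using hεφ.const_mul C
      exact h5.eventually (eventually_lt_nhds (by positivity))
    obtain ⟨m₀, hm₀⟩ := eventually_atTop.1 hε1
    refine ⟨m₀, fun m hm => ?_⟩
    have hφN : N₀ ≤ φ m := Nat.le_add_left _ _
    have h6 := hdb (φ m) hφN δ hδ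
    have h7 : (C * ε (φ m))/(c * δ) < η/2 := by
      rw [div_lt_iff₀ (by positivity : (0:ℝ) < c * δ)]
      exact hm₀ m hm
    have h8 : δ * (β - α) ≤ η/2 := by
      rw [hδdef]
      rw [div_mul_eq_mul_div, div_le_div_iff₀ (by linarith) (by norm_num)]
      nlinarith
    have h9 : 0 ≤ ∫ x in s₀, d (u (φ m) x) :=
      setIntegral_nonneg measurableSet_Ioo (fun x _ => hdnonneg _)
    rw [Real.dist_eq, sub_zero, abs_of_nonneg h9]
    linarith

  -- the clipping function
  have hBA : 0 < B - A := by linarith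
  set L : ℝ := 2/(B-A) with hLdef
  have hL0 : 0 < L := by positivity
  set fc : ℝ → ℝ := fun y => max (-1) (min 1 ((2*y - A - B)/(B-A))) with hfcdef
  have hfcB : fc B = 1 := by
    show max (-1) (min 1 ((2*B - A - B)/(B-A))) = 1
    have h1 : (2*B - A - B)/(B-A) = 1 := by
      rw [div_eq_one_iff_eq (by linarith : B - A ≠ 0)]
      ring
    rw [h1]
    norm_num
  have hfcA : fc A = -1 := by
    show max (-1) (min 1 ((2*A - A - B)/(B-A))) = -1
    have h1 : (2*A - A - B)/(B-A) = -1 := by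
      rw [div_eq_iff (by linarith : B - A ≠ 0)]
      ring
    rw [h1]
    norm_num
  have hfclip : ∀ y z, |fc y - fc z| ≤ L * |y - z| := by
    intro y z
    have h1 : |fc y - fc z| ≤ |min 1 ((2*y - A - B)/(B-A)) - min 1 ((2*z - A - B)/(B-A))| := by
      show |max (-1) _ - max (-1) _| ≤ _
      rw [max_comm (-1) _, max_comm (-1) _]
      exact abs_max_sub_max_le_abs _ _ _
    have h2 : |min 1 ((2*y - A - B)/(B-A)) - min 1 ((2*z - A - B)/(B-A))|
        ≤ max |(1:ℝ) - 1| |(2*y - A - B)/(B-A) - (2*z - A - B)/(B-A)| :=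
      abs_min_sub_min_le_max _ _ _ _
    have h3 : max |(1:ℝ) - 1| |(2*y - A - B)/(B-A) - (2*z - A - B)/(B-A)|
        = |(2*y - A - B)/(B-A) - (2*z - A - B)/(B-A)| := by
      rw [sub_self, abs_zero]
      exact max_eq_right (abs_nonneg _)
    have h4 : (2*y - A - B)/(B-A) - (2*z - A - B)/(B-A) = L * (y - z) := by
      rw [hLdef]
      field_simp
      ring
    have h5 : |L * (y - z)| = L * |y - z| := by
      rw [abs_mul, abs_of_pos hL0]
    calc |fc y - fc z| ≤ max |(1:ℝ) - 1| |(2*y - A - B)/(B-A) - (2*z - A - B)/(B-A)| :=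
          le_trans h1 h2
      _ = |(2*y - A - B)/(B-A) - (2*z - A - B)/(B-A)| := h3
      _ = L * |y - z| := by rw [h4, h5]
  have hfcbd : ∀ y, |fc y| ≤ 1 := by
    intro y
    rw [abs_le]
    exact ⟨le_max_left _ _, max_le (by norm_num) (min_le_left _ _)⟩
  set v : ℝ → ℝ := fun x => fc (w x) with hvdef
  -- bounded variation of v
  have hwBV : BoundedVariationOn w s₀ := by
    apply evar_sub_mono (K := C₃ + 3) (hPfmono.monotoneOn _) (hQfmono.monotoneOn _)
    · exact fun x _ => le_trans (hPfbd x) (by linarith)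
    · exact fun x _ => hQfbd x
  have hfcLip : LipschitzWith (Real.toNNReal L) fc := by
    apply LipschitzWith.of_dist_le_mul
    intro y z
    rw [Real.dist_eq, Real.dist_eq, Real.coe_toNNReal _ (le_of_lt hL0)]
    exact hfclip y z
  have hvBV : BoundedVariationOn v s₀ := hfcLip.comp_boundedVariationOn hwBV
  -- v takes values in {±1} a.e.
  set D' : ℝ → ℝ := fun y => min |y - A| |y - B| with hD'def
  have hD'nonneg : ∀ y, 0 ≤ D' y := fun y => le_min (abs_nonneg _) (abs_nonneg _)
  have hD'meas : AEStronglyMeasurable (fun x => D' (w x)) (volume.restrict s₀) := by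
    have hD'cont : Continuous D' :=
      ((continuous_id.sub continuous_const).abs).min ((continuous_id.sub continuous_const).abs)
    exact hD'cont.comp_aestronglyMeasurable hwmeas.aestronglyMeasurable
  have hD'int : Integrable (fun x => D' (w x)) (volume.restrict s₀) := by
    apply Integrable.mono' (integrable_const (Kw + 3)) hD'meas
    filter_upwards with x
    rw [Real.norm_eq_abs, abs_of_nonneg (hD'nonneg _)]
    calc D' (w x) ≤ |w x - A| := min_le_left _ _
      _ ≤ |w x| + |A| := by
          calc |w x - A| = |w x + -A| := by rw [sub_eq_add_neg]
            _ ≤ |w x| + |-A| := abs_add_le _ _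
            _ = |w x| + |A| := by rw [abs_neg]
      _ ≤ Kw + 3 := add_le_add (hwbd x) (hGbd _)
  have hD'le : ∀ m, (∫ x in s₀, D' (w x)) ≤
      (∫ x in s₀, |f (φ m) x - w x|) + ∫ x in s₀, d (u (φ m) x) := by
    intro m
    have hptw : ∀ x ∈ s₀, D' (w x) ≤ |f (φ m) x - w x| + d (u (φ m) x) := by
      intro x _
      have e1 : |w x - A| ≤ |f (φ m) x - A| + |w x - f (φ m) x| := by
        have := abs_sub_le (w x) (f (φ m) x) A
        linarith [this, abs_sub_comm (w x) (f (φ m) x)]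
      have e2 : |w x - B| ≤ |f (φ m) x - B| + |w x - f (φ m) x| := by
        have := abs_sub_le (w x) (f (φ m) x) B
        linarith [this]
      have e3 : D' (w x) ≤ D' (f (φ m) x) + |w x - f (φ m) x| := by
        calc D' (w x) ≤ min (|f (φ m) x - A| + |w x - f (φ m) x|)
              (|f (φ m) x - B| + |w x - f (φ m) x|) := le_min
                (le_trans (min_le_left _ _) e1) (le_trans (min_le_right _ _) e2)
          _ = D' (f (φ m) x) + |w x - f (φ m) x| := by
              rw [← min_add_add_right]
      have e4 : D' (f (φ m) x) ≤ d (u (φ m) x) := by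
        have e5 : |G (u (φ m) x) - A| ≤ |u (φ m) x + 1| := hGA _
        have e6 : |G (u (φ m) x) - B| ≤ |u (φ m) x - 1| := hGB _
        calc D' (f (φ m) x) ≤ min |u (φ m) x + 1| |u (φ m) x - 1| := min_le_min e5 e6
          _ = d (u (φ m) x) := min_comm _ _
      have e7 : |w x - f (φ m) x| = |f (φ m) x - w x| := abs_sub_comm _ _
      linarith
    calc (∫ x in s₀, D' (w x)) ≤ ∫ x in s₀, (|f (φ m) x - w x| + d (u (φ m) x)) :=
          setIntegral_mono_on hD'int ((hfwint (φ m)).add (hdint (φ m)))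
            measurableSet_Ioo hptw
      _ = (∫ x in s₀, |f (φ m) x - w x|) + ∫ x in s₀, d (u (φ m) x) :=
          MeasureTheory.integral_add (hfwint (φ m)) (hdint (φ m))
  have hD'zero : (∫ x in s₀, D' (w x)) = 0 := by
    have hub : Tendsto (fun m => (∫ x in s₀, |f (φ m) x - w x|) + ∫ x in s₀, d (u (φ m) x))
        atTop (nhds 0) := by
      have := hL1G.add hL1d
      rwa [add_zero] at this
    have hge : 0 ≤ ∫ x in s₀, D' (w x) :=
      setIntegral_nonneg measurableSet_Ioo (fun x _ => hD'nonneg _)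
    have hle : (∫ x in s₀, D' (w x)) ≤ 0 :=
      ge_of_tendsto hub (Eventually.of_forall hD'le)
    linarith
  have hD'ae : ∀ᵐ x ∂(volume.restrict s₀), D' (w x) = 0 := by
    have := (MeasureTheory.integral_eq_zero_iff_of_nonneg_ae
      (Eventually.of_forall (fun x => hD'nonneg (w x))) hD'int).1 hD'zero
    filter_upwards [this] with x hx
    exact hx
  have hvae : ∀ᵐ x ∂(volume.restrict s₀), v x = 1 ∨ v x = -1 := by
    filter_upwards [hD'ae] with x hx
    have : w x = A ∨ w x = B := by
      rcases le_total |w x - A| |w x - B| with h | h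
      · left
        have : |w x - A| = 0 := by
          have := min_eq_left h
          rw [hD'def] at hx
          simp only at hx
          linarith [this.symm.trans hx]
        have := abs_eq_zero.1 this
        linarith
      · right
        have : |w x - B| = 0 := by
          have := min_eq_right h
          rw [hD'def] at hx
          simp only at hx
          linarith [this.symm.trans hx]
        have := abs_eq_zero.1 this
        linarith
    rcases this with h | h
    · right
      show fc (w x) = -1
      rw [h, hfcA]
    · left
      show fc (w x) = 1
      rw [h, hfcB]
  -- final convergence
  refine ⟨φ, hφmono, v, hvBV, hvae, ?_⟩
  have hvmeas : AEStronglyMeasurable v (volume.restrict s₀) :=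
    hfcLip.continuous.comp_aestronglyMeasurable hwmeas.aestronglyMeasurable
  have hvint : Integrable v (volume.restrict s₀) := by
    apply Integrable.mono' (integrable_const 1) hvmeas
    filter_upwards with x
    rw [Real.norm_eq_abs]
    exact hfcbd _
  have huint : ∀ j, IntegrableOn (u j) s₀ := fun j =>
    ((hucont j).integrableOn_Icc).mono_set Set.Ioo_subset_Icc_self
  have hIu : ∀ m, Integrable (fun x => |u (φ m) x - v x|) (volume.restrict s₀) :=
    fun m => ((huint (φ m)).sub hvint).abs
  have hptfinal : ∀ m, ∀ x ∈ s₀, |u (φ m) x - v x| ≤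
      (1+L) * d (u (φ m) x) + L * |f (φ m) x - w x| := by
    intro m x _
    have habs1 : |u (φ m) x - v x| = |u (φ m) x - fc (w x)| := rfl
    have hfG : f (φ m) x = G (u (φ m) x) := rfl
    rcases le_total |u (φ m) x - 1| |u (φ m) x + 1| with hcase | hcase
    · have hds : d (u (φ m) x) = |u (φ m) x - 1| := min_eq_left hcase
      have e1 : |u (φ m) x - fc (w x)| ≤ |u (φ m) x - 1| + |1 - fc (w x)| :=
        abs_sub_le _ 1 _
      have e2 : |1 - fc (w x)| = |fc B - fc (w x)| := by rw [hfcB]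
      have e3 : |fc B - fc (w x)| ≤ L * |B - w x| := hfclip B (w x)
      have e4 : |B - w x| ≤ |B - G (u (φ m) x)| + |G (u (φ m) x) - w x| :=
        abs_sub_le B (G (u (φ m) x)) (w x)
      have e5 : |B - G (u (φ m) x)| = |G (u (φ m) x) - B| := abs_sub_comm _ _
      have e6 : |G (u (φ m) x) - B| ≤ |u (φ m) x - 1| := hGB _
      have e7 : L * |B - w x| ≤ L * (|u (φ m) x - 1| + |G (u (φ m) x) - w x|) := by
        apply mul_le_mul_of_nonneg_left _ (le_of_lt hL0)
        linarith [e4, e5.le, e5.ge, e6]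
      rw [habs1, hds, hfG]
      calc |u (φ m) x - fc (w x)| ≤ |u (φ m) x - 1| + |fc B - fc (w x)| := by
            rw [← e2]; exact e1
        _ ≤ |u (φ m) x - 1| + L * |B - w x| := by linarith [e3]
        _ ≤ |u (φ m) x - 1| + L * (|u (φ m) x - 1| + |G (u (φ m) x) - w x|) := by
            linarith [e7]
        _ = (1+L) * |u (φ m) x - 1| + L * |G (u (φ m) x) - w x| := by ring
    · have hds : d (u (φ m) x) = |u (φ m) x + 1| := min_eq_right hcase
      have e1 : |u (φ m) x - fc (w x)| ≤ |u (φ m) x - (-1)| + |(-1) - fc (w x)| :=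
        abs_sub_le _ (-1) _
      have e1' : |u (φ m) x - (-1)| = |u (φ m) x + 1| := by rw [sub_neg_eq_add]
      have e2 : |(-1) - fc (w x)| = |fc A - fc (w x)| := by rw [hfcA]
      have e3 : |fc A - fc (w x)| ≤ L * |A - w x| := hfclip A (w x)
      have e4 : |A - w x| ≤ |A - G (u (φ m) x)| + |G (u (φ m) x) - w x| :=
        abs_sub_le A (G (u (φ m) x)) (w x)
      have e5 : |A - G (u (φ m) x)| = |G (u (φ m) x) - A| := abs_sub_comm _ _
      have e6 : |G (u (φ m) x) - A| ≤ |u (φ m) x + 1| := hGA _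
      have e7 : L * |A - w x| ≤ L * (|u (φ m) x + 1| + |G (u (φ m) x) - w x|) := by
        apply mul_le_mul_of_nonneg_left _ (le_of_lt hL0)
        linarith [e4, e5.le, e5.ge, e6]
      rw [habs1, hds, hfG]
      calc |u (φ m) x - fc (w x)| ≤ |u (φ m) x + 1| + |fc A - fc (w x)| := by
            rw [← e2, ← e1']; exact e1
        _ ≤ |u (φ m) x + 1| + L * |A - w x| := by linarith [e3]
        _ ≤ |u (φ m) x + 1| + L * (|u (φ m) x + 1| + |G (u (φ m) x) - w x|) := by
            linarith [e7]
        _ = (1+L) * |u (φ m) x + 1| + L * |G (u (φ m) x) - w x| := by ring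
  have hsq : ∀ m, (∫ x in s₀, |u (φ m) x - v x|) ≤
      (1+L) * (∫ x in s₀, d (u (φ m) x)) + L * (∫ x in s₀, |f (φ m) x - w x|) := by
    intro m
    have hIrhs : Integrable
        (fun x => (1+L) * d (u (φ m) x) + L * |f (φ m) x - w x|) (volume.restrict s₀) :=
      ((hdint (φ m)).const_mul _).add ((hfwint (φ m)).const_mul _)
    calc (∫ x in s₀, |u (φ m) x - v x|)
        ≤ ∫ x in s₀, ((1+L) * d (u (φ m) x) + L * |f (φ m) x - w x|) :=
          setIntegral_mono_on (hIu m) hIrhs measurableSet_Ioo (hptfinal m)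
      _ = (1+L) * (∫ x in s₀, d (u (φ m) x)) + L * (∫ x in s₀, |f (φ m) x - w x|) := by
          rw [MeasureTheory.integral_add ((hdint (φ m)).const_mul _)
            ((hfwint (φ m)).const_mul _), MeasureTheory.integral_const_mul,
            MeasureTheory.integral_const_mul]
  have hnn : ∀ m, 0 ≤ ∫ x in s₀, |u (φ m) x - v x| :=
    fun m => setIntegral_nonneg measurableSet_Ioo (fun x _ => abs_nonneg _)
  have hlim : Tendsto (fun m => (1+L) * (∫ x in s₀, d (u (φ m) x))
      + L * (∫ x in s₀, |f (φ m) x - w x|)) atTop (nhds 0) := by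
    have h1 := (hL1d.const_mul (1+L)).add (hL1G.const_mul L)
    simpa using h1
  have hgoal : Tendsto (fun m => ∫ x in s₀, |u (φ m) x - v x|) atTop (nhds 0) :=
    tendsto_of_tendsto_of_tendsto_of_le_of_le tendsto_const_nhds hlim hnn hsq
  have hconv : ∀ m, (∫ x in α..β, |u (φ m) x - v x|) = ∫ x in s₀, |u (φ m) x - v x| := by
    intro m
    rw [intervalIntegral.integral_of_le (le_of_lt hαβ),
      MeasureTheory.integral_Ioc_eq_integral_Ioo]
  exact hgoal.congr (fun m => (hconv m).symm)
end

section
/- Let k₀ > 0 be the constant from the nonlinear interpolation inequality for W and let 0 < k < k₀. Then the constant m_k := inf { ∫_ℝ (W(f) − k(f')² + (f'')²) dx : f ∈ 𝒜 } is strictly positive. -/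
open MeasureTheory intervalIntegral

/-- `u ∈ W^{2,2}_loc(ℝ)` with first derivative `u'` and second derivative `u''`. -/
def W22loc (u u' u'' : ℝ → ℝ) : Prop :=
  (∀ x : ℝ, HasDerivAt u (u' x) x) ∧
  Continuous u' ∧
  (∀ a b : ℝ, MeasureTheory.IntegrableOn u'' (Set.Icc a b)) ∧
  (∀ a b : ℝ, MeasureTheory.IntegrableOn (fun x => (u'' x) ^ 2) (Set.Icc a b)) ∧
  (∀ x y : ℝ, u' y = u' x + ∫ t in x..y, u'' t)

/-- The optimal-profile energy
`m_k := inf { ∫_ℝ (W(f) − k (f')² + (f'')²) : f ∈ 𝒜 }`, where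
`𝒜 = { f ∈ W^{2,2}_loc(ℝ) : ∃ T > 0, f ≡ 1 on (T,∞), f ≡ −1 on (−∞,−T) }`. -/
noncomputable def mConst (W : ℝ → ℝ) (k : ℝ) : ℝ :=
  sInf {r : ℝ | ∃ f f' f'' : ℝ → ℝ, W22loc f f' f'' ∧
    (∃ T : ℝ, 0 < T ∧ (∀ x, T < x → f x = 1) ∧ (∀ x, x < -T → f x = -1)) ∧
    r = ∫ x : ℝ, (W (f x) - k * (f' x) ^ 2 + (f'' x) ^ 2)}

section Aux

open Filter Topology
open scoped ContDiff

/-- Cauchy–Schwarz for interval integrals of continuous functions. -/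
lemma aux_cs (g : ℝ → ℝ) (hg : Continuous g) (a b : ℝ) (hab : a ≤ b) :
    (∫ x in a..b, g x) ^ 2 ≤ (b - a) * ∫ x in a..b, (g x) ^ 2 := by
  rcases eq_or_lt_of_le hab with rfl | hlt
  · simp
  set L := b - a with hL
  have hLpos : 0 < L := by simp [hL]; linarith
  set s : ℝ := (∫ x in a..b, g x) / L with hs
  have hig : IntervalIntegrable g volume a b := hg.intervalIntegrable a b
  have hig2 : IntervalIntegrable (fun x => (g x) ^ 2) volume a b :=
    (hg.pow 2).intervalIntegrable a b
  have h1 : (0:ℝ) ≤ ∫ x in a..b, (g x - s) ^ 2 :=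
    intervalIntegral.integral_nonneg hab (fun x _ => sq_nonneg _)
  have h2 : ∫ x in a..b, (g x - s) ^ 2
      = (∫ x in a..b, (g x) ^ 2) - 2 * s * (∫ x in a..b, g x) + s ^ 2 * L := by
    have hfun : (fun x => (g x - s) ^ 2)
        = fun x => ((g x) ^ 2 - (2 * s) * g x) + s ^ 2 := by
      funext x; ring
    rw [hfun, intervalIntegral.integral_add (hig2.sub (hig.const_mul (2*s)))
      intervalIntegrable_const, intervalIntegral.integral_sub hig2 (hig.const_mul (2*s)),
      intervalIntegral.integral_const_mul, intervalIntegral.integral_const]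
    simp [hL]; ring
  have h3 : (∫ x in a..b, g x) = s * L := by rw [hs, div_mul_cancel₀ _ hLpos.ne']
  nlinarith [h1, h2, h3, sq_nonneg s, hLpos]

/-- There exists an admissible profile. -/
lemma aux_exists : ∃ f f' f'' : ℝ → ℝ, W22loc f f' f'' ∧
    (∃ T : ℝ, 0 < T ∧ (∀ x, T < x → f x = 1) ∧ (∀ x, x < -T → f x = -1)) := by
  set g : ℝ → ℝ := fun x => 2 * Real.smoothTransition ((x + 1) / 2) - 1 with hgdef
  have hcd : ContDiff ℝ ∞ g := by
    apply ContDiff.sub _ contDiff_const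
    exact contDiff_const.mul ((Real.smoothTransition.contDiff (n := ⊤)).comp <|
      ((contDiff_id.add contDiff_const).div_const 2 : ContDiff ℝ ∞ fun x : ℝ => (x + 1) / 2))
  have hdg : Differentiable ℝ g := hcd.differentiable (by norm_num)
  have hcd' : ContDiff ℝ ∞ (deriv g) := (contDiff_infty_iff_deriv.1 hcd).2
  have hdg' : Differentiable ℝ (deriv g) := hcd'.differentiable (by norm_num)
  have hc'' : Continuous (deriv (deriv g)) := (contDiff_infty_iff_deriv.1 hcd').2.continuous
  refine ⟨g, deriv g, deriv (deriv g), ⟨fun x => (hdg x).hasDerivAt, hcd'.continuous,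
    fun a b => hc''.integrableOn_Icc, fun a b => (hc''.pow 2).integrableOn_Icc,
    fun x y => ?_⟩, ⟨1, one_pos, fun x hx => ?_, fun x hx => ?_⟩⟩
  · have := intervalIntegral.integral_eq_sub_of_hasDerivAt
      (f := deriv g) (f' := deriv (deriv g))
      (fun t _ => (hdg' t).hasDerivAt) (hc''.intervalIntegrable x y)
    linarith
  · have h1 : Real.smoothTransition ((x + 1) / 2) = 1 :=
      Real.smoothTransition.one_of_one_le (by linarith)
    simp [hgdef, h1]; ring
  · have h1 : Real.smoothTransition ((x + 1) / 2) = 0 :=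
      Real.smoothTransition.zero_of_nonpos (by linarith)
    simp [hgdef, h1]

/-- If the first derivative vanishes on `(T,∞)` and `(-∞,-T)`, the second derivative
vanishes a.e. there. -/
lemma aux_ae_zero (f' f'' : ℝ → ℝ)
    (hIf'' : ∀ a b : ℝ, MeasureTheory.IntegrableOn f'' (Set.Icc a b))
    (hrep : ∀ x y : ℝ, f' y = f' x + ∫ t in x..y, f'' t)
    (T : ℝ) (hf'0 : ∀ x, (T < x ∨ x < -T) → f' x = 0) :
    ∀ᵐ x, (T < x ∨ x < -T) → f'' x = 0 := by
  have hLI : MeasureTheory.LocallyIntegrable f'' volume := by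
    rw [MeasureTheory.locallyIntegrable_iff]
    intro K hK
    obtain ⟨r, hr⟩ := (Metric.isBounded_iff_subset_closedBall 0).1 hK.isBounded
    rw [Real.closedBall_eq_Icc] at hr
    exact (hIf'' (0 - r) (0 + r)).mono_set hr
  filter_upwards [(IsUnifLocDoublingMeasure.vitaliFamily (volume : Measure ℝ)
    1).ae_tendsto_average hLI] with x hx
  have key : ∀ u v : ℝ, u < v → (T < u ∨ v < -T) →
      ⨍ t in Set.Icc u v, f'' t = 0 := by
    intro u v huv hcase
    have hiuv : ∫ t in Set.Icc u v, f'' t = f' v - f' u := by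
      rw [MeasureTheory.integral_Icc_eq_integral_Ioc,
        ← intervalIntegral.integral_of_le huv.le]
      have := hrep u v; linarith
    have h0u : f' u = 0 := hf'0 u (hcase.imp id (fun h => by linarith))
    have h0v : f' v = 0 := hf'0 v (hcase.imp (fun h => by linarith) id)
    rw [MeasureTheory.setAverage_eq, hiuv, h0u, h0v]
    simp
  intro hc
  rcases hc with h | h
  · have h2 : Tendsto (fun y => ⨍ t in Set.Icc x y, f'' t) (𝓝[>] x) (𝓝 (f'' x)) :=
      hx.comp (Real.tendsto_Icc_vitaliFamily_right x)
    have h3 : Tendsto (fun y => ⨍ t in Set.Icc x y, f'' t) (𝓝[>] x) (𝓝 0) := by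
      apply Tendsto.congr' _ tendsto_const_nhds
      filter_upwards [self_mem_nhdsWithin] with y hy
      exact (key x y hy (Or.inl h)).symm
    exact tendsto_nhds_unique h2 h3
  · have h2 : Tendsto (fun y => ⨍ t in Set.Icc y x, f'' t) (𝓝[<] x) (𝓝 (f'' x)) :=
      hx.comp (Real.tendsto_Icc_vitaliFamily_left x)
    have h3 : Tendsto (fun y => ⨍ t in Set.Icc y x, f'' t) (𝓝[<] x) (𝓝 0) := by
      apply Tendsto.congr' _ tendsto_const_nhds
      filter_upwards [self_mem_nhdsWithin] with y hy
      exact (key y x hy (Or.inr h)).symm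
    exact tendsto_nhds_unique h2 h3

end Aux

/-- For `0 < k < k₀`, the optimal-profile constant `m_k` is strictly positive. -/
theorem mConst_pos
    (W : ℝ → ℝ) (hWcont : Continuous W) (hWnonneg : ∀ s, 0 ≤ W s)
    (hWzero : ∀ s, W s = 0 ↔ s = 1 ∨ s = -1)
    (c : ℝ) (hc : 0 < c)
    (hWgp : ∀ s, 0 ≤ s → c * (s - 1) ^ 2 ≤ W s)
    (hWgn : ∀ s, s ≤ 0 → c * (s + 1) ^ 2 ≤ W s)
    (k₀ : ℝ) (hk₀pos : 0 < k₀)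
    (hk₀ : ∀ a b : ℝ, a < b → ∀ u u' u'' : ℝ → ℝ, W22On u u' u'' a b →
      k₀ * ∫ x in a..b, (u' x) ^ 2 ≤
        ((b - a) ^ 2)⁻¹ * (∫ x in a..b, W (u x)) +
          (b - a) ^ 2 * ∫ x in a..b, (u'' x) ^ 2)
    (k : ℝ) (hkpos : 0 < k) (hk : k < k₀) :
    0 < mConst W k := by
  have hμ₀pos : (0:ℝ) < min (c/4) (k₀/4) := lt_min (by positivity) (by positivity)
  have hkk : k / k₀ < 1 := (div_lt_one hk₀pos).2 hk
  have hkknn : (0:ℝ) ≤ 1 - k / k₀ := by linarith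
  have hmpos : 0 < (1 - k/k₀) * min (c/4) (k₀/4) := mul_pos (by linarith) hμ₀pos
  have hne : Set.Nonempty {r : ℝ | ∃ f f' f'' : ℝ → ℝ, W22loc f f' f'' ∧
      (∃ T : ℝ, 0 < T ∧ (∀ x, T < x → f x = 1) ∧ (∀ x, x < -T → f x = -1)) ∧
      r = ∫ x : ℝ, (W (f x) - k * (f' x) ^ 2 + (f'' x) ^ 2)} := by
    obtain ⟨f, f', f'', h1, h2⟩ := aux_exists
    exact ⟨_, f, f', f'', h1, h2, rfl⟩
  refine lt_of_lt_of_le hmpos (le_csInf hne ?_)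
  rintro r ⟨f, f', f'', ⟨hd1, hcf', hIf'', hIf''2, hrep⟩, ⟨T, hT, hfp, hfm⟩, rfl⟩
  -- basic continuity and integrability facts
  have hfc : Continuous f := by
    rw [continuous_iff_continuousAt]; exact fun x => (hd1 x).continuousAt
  have hWfc : Continuous fun x => W (f x) := hWcont.comp hfc
  have hcf'2 : Continuous fun x => (f' x) ^ 2 := hcf'.pow 2
  have hii''2 : ∀ a b : ℝ, IntervalIntegrable (fun x => (f'' x) ^ 2) volume a b := by
    intro a b
    apply MeasureTheory.IntegrableOn.intervalIntegrable
    exact (hIf''2 (min a b) (max a b)).mono_set (by rw [Set.uIcc])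
  have hiih : ∀ a b : ℝ, IntervalIntegrable
      (fun x => W (f x) - k * (f' x) ^ 2 + (f'' x) ^ 2) volume a b := fun a b =>
    ((hWfc.intervalIntegrable a b).sub
      ((hcf'2.intervalIntegrable a b).const_mul k)).add (hii''2 a b)
  have hW22On : ∀ a b : ℝ, W22On f f' f'' a b := fun a b =>
    ⟨fun x _ => (hd1 x).hasDerivWithinAt, hcf'.continuousOn, hIf'' a b, hIf''2 a b,
     fun x _ => hrep a x⟩
  have hWnn : ∀ a b : ℝ, a ≤ b → 0 ≤ ∫ x in a..b, W (f x) := fun a b hab =>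
    intervalIntegral.integral_nonneg hab fun x _ => hWnonneg _
  have hf''nn : ∀ a b : ℝ, a ≤ b → 0 ≤ ∫ x in a..b, (f'' x) ^ 2 := fun a b hab =>
    intervalIntegral.integral_nonneg hab fun x _ => sq_nonneg _
  have hf'nn : ∀ a b : ℝ, a ≤ b → 0 ≤ ∫ x in a..b, (f' x) ^ 2 := fun a b hab =>
    intervalIntegral.integral_nonneg hab fun x _ => sq_nonneg _
  -- interpolation on unit intervals
  have hinterp : ∀ a : ℝ, k₀ * ∫ x in a..a+1, (f' x) ^ 2
      ≤ (∫ x in a..a+1, W (f x)) + ∫ x in a..a+1, (f'' x) ^ 2 := by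
    intro a
    have h1 := hk₀ a (a+1) (by linarith) f f' f'' (hW22On a (a+1))
    have h2 : a + 1 - a = 1 := by ring
    rw [h2] at h1
    norm_num at h1
    exact h1
  -- lower bound on each unit interval
  have hBlow : ∀ a : ℝ,
      (1 - k / k₀) * ((∫ x in a..a+1, W (f x)) + ∫ x in a..a+1, (f'' x) ^ 2)
      ≤ ∫ x in a..a+1, (W (f x) - k * (f' x) ^ 2 + (f'' x) ^ 2) := by
    intro a
    have hsplit : ∫ x in a..a+1, (W (f x) - k * (f' x) ^ 2 + (f'' x) ^ 2)
        = (∫ x in a..a+1, W (f x)) - k * (∫ x in a..a+1, (f' x) ^ 2)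
          + ∫ x in a..a+1, (f'' x) ^ 2 := by
      rw [intervalIntegral.integral_add ((hWfc.intervalIntegrable _ _).sub
          ((hcf'2.intervalIntegrable _ _).const_mul k)) (hii''2 _ _),
        intervalIntegral.integral_sub (hWfc.intervalIntegrable _ _)
          ((hcf'2.intervalIntegrable _ _).const_mul k),
        intervalIntegral.integral_const_mul]
    have h2 := hinterp a
    have h4 := mul_le_mul_of_nonneg_left h2 (div_nonneg hkpos.le hk₀pos.le)
    have h5 : k / k₀ * (k₀ * ∫ x in a..a+1, (f' x) ^ 2)
        = k * ∫ x in a..a+1, (f' x) ^ 2 := by field_simp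
    rw [h5] at h4
    rw [hsplit]
    nlinarith [h4]
  have hBnn : ∀ a : ℝ, 0 ≤ ∫ x in a..a+1, (W (f x) - k * (f' x) ^ 2 + (f'' x) ^ 2) :=
    fun a => le_trans (mul_nonneg hkknn (add_nonneg (hWnn _ _ (by linarith))
      (hf''nn _ _ (by linarith)))) (hBlow a)
  -- a zero of f
  obtain ⟨x₀, hx₀mem, hx₀⟩ : ∃ x₀ ∈ Set.Icc (-(T+1)) (T+1), f x₀ = 0 := by
    have h1 : f (-(T+1)) = -1 := hfm _ (by linarith)
    have h2 : f (T+1) = 1 := hfp _ (by linarith)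
    have h3 := intermediate_value_Icc (by linarith : -(T+1) ≤ T+1) hfc.continuousOn
    have h0 : (0:ℝ) ∈ Set.Icc (f (-(T+1))) (f (T+1)) := by rw [h1, h2]; norm_num
    obtain ⟨x₀, hmem, hval⟩ := h3 h0
    exact ⟨x₀, hmem, hval⟩
  -- lower bound on the special interval
  have hC : min (c/4) (k₀/4)
      ≤ (∫ x in x₀..x₀+1, W (f x)) + ∫ x in x₀..x₀+1, (f'' x) ^ 2 := by
    by_cases hcase : ∀ x ∈ Set.Icc x₀ (x₀+1), |f x| ≤ 1/2
    · have hpt : ∀ x ∈ Set.Icc x₀ (x₀+1), c/4 ≤ W (f x) := by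
        intro x hxm
        have habs := abs_le.1 (hcase x hxm)
        rcases le_or_gt 0 (f x) with h0 | h0
        · have e1 : (1:ℝ)/4 ≤ (f x - 1) ^ 2 := by nlinarith [habs.2]
          nlinarith [mul_le_mul_of_nonneg_left e1 hc.le, hWgp (f x) h0]
        · have e1 : (1:ℝ)/4 ≤ (f x + 1) ^ 2 := by nlinarith [habs.1]
          nlinarith [mul_le_mul_of_nonneg_left e1 hc.le, hWgn (f x) h0.le]
      have hmono : c/4 ≤ ∫ x in x₀..x₀+1, W (f x) := by
        have h6 := intervalIntegral.integral_mono_on (by linarith : x₀ ≤ x₀+1)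
          (_root_.intervalIntegrable_const (μ := volume) (c := c/4)) (hWfc.intervalIntegrable _ _) hpt
        simpa using h6
      have h7 := hf''nn x₀ (x₀+1) (by linarith)
      calc min (c/4) (k₀/4) ≤ c/4 := min_le_left _ _
        _ ≤ _ := by linarith
    · push_neg at hcase
      obtain ⟨x₁, hx₁m, hx₁⟩ := hcase
      have hle : x₀ ≤ x₁ := hx₁m.1
      have hFTC : ∫ x in x₀..x₁, f' x = f x₁ - f x₀ :=
        intervalIntegral.integral_eq_sub_of_hasDerivAt (fun t _ => hd1 t)
          (hcf'.intervalIntegrable _ _)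
      have hcs := aux_cs f' hcf' x₀ x₁ hle
      have hmono2 : ∫ x in x₀..x₁, (f' x) ^ 2 ≤ ∫ x in x₀..x₀+1, (f' x) ^ 2 :=
        intervalIntegral.integral_mono_interval le_rfl hle hx₁m.2
          (Filter.Eventually.of_forall fun x => sq_nonneg _)
          (hcf'2.intervalIntegrable _ _)
      have h14 : (1:ℝ)/4 ≤ ∫ x in x₀..x₀+1, (f' x) ^ 2 := by
        have h1 : (1:ℝ)/4 < (f x₁) ^ 2 := by
          nlinarith [sq_abs (f x₁), hx₁, abs_nonneg (f x₁)]
        have h2 : (f x₁) ^ 2 = (∫ x in x₀..x₁, f' x) ^ 2 := by rw [hFTC, hx₀]; ring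
        have h3 : x₁ - x₀ ≤ 1 := by have := hx₁m.2; linarith
        have h4 := hf'nn x₀ x₁ hle
        nlinarith [hcs, hmono2]
      have h8 := hinterp x₀
      calc min (c/4) (k₀/4) ≤ k₀/4 := min_le_right _ _
        _ ≤ k₀ * ∫ x in x₀..x₀+1, (f' x) ^ 2 := by nlinarith
        _ ≤ _ := h8
  -- vanishing of f' outside [-T,T]
  have hf'0 : ∀ x, (T < x ∨ x < -T) → f' x = 0 := by
    intro x hx
    rcases hx with h | h
    · have hev : f =ᶠ[nhds x] fun _ => (1:ℝ) := by
        filter_upwards [Ioi_mem_nhds h] with y hy using hfp y hy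
      exact (hd1 x).unique ((hasDerivAt_const x (1:ℝ)).congr_of_eventuallyEq hev)
    · have hev : f =ᶠ[nhds x] fun _ => (-1:ℝ) := by
        filter_upwards [Iio_mem_nhds h] with y hy using hfm y hy
      exact (hd1 x).unique ((hasDerivAt_const x (-1:ℝ)).congr_of_eventuallyEq hev)
  have hae := aux_ae_zero f' f'' hIf'' hrep T hf'0
  -- enclosing interval
  obtain ⟨N, hN⟩ := exists_nat_ge (|x₀| + T + 2)
  have hxle : x₀ ≤ |x₀| := le_abs_self x₀
  have hxge : -|x₀| ≤ x₀ := neg_abs_le x₀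
  set A := x₀ - N with hAdef
  set Bv := x₀ + N with hBdef
  have hAle : A ≤ -(T+1) := by simp only [hAdef]; linarith
  have hBge : T+1 ≤ Bv := by simp only [hBdef]; linarith
  have hAB : A ≤ Bv := by linarith
  have hNpos : 0 < N := by
    rcases Nat.eq_zero_or_pos N with h0 | h0
    · exfalso; rw [h0] at hN; push_cast at hN; have := abs_nonneg x₀; linarith
    · exact h0
  -- the integrand vanishes a.e. outside [A, Bv]
  have hvanish : ∀ᵐ x, x ∉ Set.Icc A Bv →
      W (f x) - k * (f' x) ^ 2 + (f'' x) ^ 2 = 0 := by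
    filter_upwards [hae] with x hx hnot
    rw [Set.mem_Icc, not_and_or, not_le, not_le] at hnot
    have hcase : T < x ∨ x < -T := by
      rcases hnot with h | h
      · right; linarith
      · left; linarith
    have hW0 : W (f x) = 0 := by
      rcases hcase with h | h
      · rw [hfp x h]; exact (hWzero 1).2 (Or.inl rfl)
      · rw [hfm x (by linarith)]; exact (hWzero (-1)).2 (Or.inr rfl)
    rw [hW0, hf'0 x hcase, hx hcase]; ring
  have hind : (fun x => W (f x) - k * (f' x) ^ 2 + (f'' x) ^ 2) =ᵐ[volume]
      (Set.Icc A Bv).indicator (fun x => W (f x) - k * (f' x) ^ 2 + (f'' x) ^ 2) := by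
    filter_upwards [hvanish] with x hx
    by_cases hm : x ∈ Set.Icc A Bv
    · rw [Set.indicator_of_mem hm]
    · rw [Set.indicator_of_notMem hm, hx hm]
  have hIOn : IntegrableOn (fun x => W (f x) - k * (f' x) ^ 2 + (f'' x) ^ 2)
      (Set.Icc A Bv) volume :=
    ((hWfc.sub (continuous_const.mul hcf'2)).integrableOn_Icc).add (hIf''2 A Bv)
  have hval : (∫ x : ℝ, (W (f x) - k * (f' x) ^ 2 + (f'' x) ^ 2))
      = ∫ x in A..Bv, (W (f x) - k * (f' x) ^ 2 + (f'' x) ^ 2) := by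
    rw [MeasureTheory.integral_congr_ae hind,
      MeasureTheory.integral_indicator measurableSet_Icc,
      MeasureTheory.integral_Icc_eq_integral_Ioc,
      ← intervalIntegral.integral_of_le hAB]
  -- split [A, Bv] into unit intervals
  set a : ℕ → ℝ := fun i => A + i with hadef
  have hsum := intervalIntegral.sum_integral_adjacent_intervals
    (a := a) (n := 2*N) (μ := volume)
    (f := fun x => W (f x) - k * (f' x) ^ 2 + (f'' x) ^ 2)
    (fun i _ => hiih (a i) (a (i+1)))
  have ha0 : a 0 = A := by simp [hadef]
  have ha2N : a (2*N) = Bv := by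
    simp only [hadef, hAdef, hBdef]; push_cast; ring
  have hstep : ∀ i : ℕ, a (i+1) = a i + 1 := by
    intro i; simp only [hadef]; push_cast; ring
  have hterm : ∀ i ∈ Finset.range (2*N),
      0 ≤ ∫ x in a i..a (i+1), (W (f x) - k * (f' x) ^ 2 + (f'' x) ^ 2) := by
    intro i _; rw [hstep i]; exact hBnn (a i)
  have hNmem : N ∈ Finset.range (2*N) := Finset.mem_range.2 (by omega)
  have haN : a N = x₀ := by simp only [hadef, hAdef]; ring
  have hkey : (1 - k/k₀) * min (c/4) (k₀/4)
      ≤ ∫ x in a N..a (N+1), (W (f x) - k * (f' x) ^ 2 + (f'' x) ^ 2) := by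
    rw [hstep N, haN]
    exact le_trans (mul_le_mul_of_nonneg_left hC hkknn) (hBlow x₀)
  calc (1 - k/k₀) * min (c/4) (k₀/4)
      ≤ ∫ x in a N..a (N+1), (W (f x) - k * (f' x) ^ 2 + (f'' x) ^ 2) := hkey
    _ ≤ ∑ i ∈ Finset.range (2*N),
        ∫ x in a i..a (i+1), (W (f x) - k * (f' x) ^ 2 + (f'' x) ^ 2) :=
        Finset.single_le_sum hterm hNmem
    _ = ∫ x in A..Bv, (W (f x) - k * (f' x) ^ 2 + (f'' x) ^ 2) := by
        rw [hsum, ha0, ha2N]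
    _ = ∫ x : ℝ, (W (f x) - k * (f' x) ^ 2 + (f'' x) ^ 2) := hval.symm
end

section
/- Let k₀ > 0 be the constant from the nonlinear interpolation inequality for W and let 0 < k < k₀. Define G^k(w,z) := inf { ∫_0^1 (W(g) − k(g')² + (g'')²) dx : g ∈ C²([0,1]), g(0) = w, g(1) = 1, g'(0) = z, g'(1) = 0 }. Then lim_{(w,z)→(1,0)} G^k(w,z) = 0. -/
open MeasureTheory intervalIntegral

/-- `G^k(w,z) := inf { ∫_0^1 (W(g) − k(g')² + (g'')²) : g ∈ C²([0,1]),
g(0) = w, g(1) = 1, g'(0) = z, g'(1) = 0 }`. -/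
noncomputable def Gk (W : ℝ → ℝ) (k : ℝ) (w z : ℝ) : ℝ :=
  sInf {r : ℝ | ∃ g g' g'' : ℝ → ℝ,
    (∀ x ∈ Set.Icc (0 : ℝ) 1, HasDerivWithinAt g (g' x) (Set.Icc (0 : ℝ) 1) x) ∧
    (∀ x ∈ Set.Icc (0 : ℝ) 1, HasDerivWithinAt g' (g'' x) (Set.Icc (0 : ℝ) 1) x) ∧
    ContinuousOn g'' (Set.Icc (0 : ℝ) 1) ∧
    g 0 = w ∧ g 1 = 1 ∧ g' 0 = z ∧ g' 1 = 0 ∧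
    r = ∫ x in (0 : ℝ)..1, (W (g x) - k * (g' x) ^ 2 + (g'' x) ^ 2)}

noncomputable def Eg (W : ℝ → ℝ) (k : ℝ) (p : ℝ × ℝ) : ℝ :=
  ∫ x in (0:ℝ)..1,
    (W (1 + (p.1 - 1) * (2*x^3 - 3*x^2 + 1) + p.2 * (x^3 - 2*x^2 + x))
      - k * ((p.1 - 1) * (6*x^2 - 6*x) + p.2 * (3*x^2 - 4*x + 1)) ^ 2
      + ((p.1 - 1) * (12*x - 6) + p.2 * (6*x - 4)) ^ 2)

lemma Eg_cont (W : ℝ → ℝ) (hW : Continuous W) (k : ℝ) : Continuous (Eg W k) := by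
  apply intervalIntegral.continuous_parametric_intervalIntegral_of_continuous'
  apply Continuous.add
  apply Continuous.sub
  · exact hW.comp (by fun_prop)
  · fun_prop
  · fun_prop

lemma hasDerivAt_gaux (w z x : ℝ) :
    HasDerivAt (fun x : ℝ => 1 + (w - 1) * (2*x^3 - 3*x^2 + 1) + z * (x^3 - 2*x^2 + x))
      ((w - 1) * (6*x^2 - 6*x) + z * (3*x^2 - 4*x + 1)) x := by
  have h3 : HasDerivAt (fun x : ℝ => x^3) (3*x^2) x := by simpa using hasDerivAt_pow 3 x
  have h2 : HasDerivAt (fun x : ℝ => x^2) (2*x) x := by simpa using hasDerivAt_pow 2 x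
  have h1 : HasDerivAt (fun x : ℝ => x) 1 x := hasDerivAt_id' (x := x)
  have hA : HasDerivAt (fun x : ℝ => 2*x^3 - 3*x^2 + 1) (2*(3*x^2) - 3*(2*x)) x :=
    ((h3.const_mul 2).sub (h2.const_mul 3)).add_const 1
  have hB : HasDerivAt (fun x : ℝ => x^3 - 2*x^2 + x) (3*x^2 - 2*(2*x) + 1) x :=
    (h3.sub (h2.const_mul 2)).add h1
  have := ((hasDerivAt_const x (1:ℝ)).add (hA.const_mul (w-1))).add (hB.const_mul z)
  exact this.congr_deriv (by ring)

lemma hasDerivAt_gaux' (w z x : ℝ) :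
    HasDerivAt (fun x : ℝ => (w - 1) * (6*x^2 - 6*x) + z * (3*x^2 - 4*x + 1))
      ((w - 1) * (12*x - 6) + z * (6*x - 4)) x := by
  have h2 : HasDerivAt (fun x : ℝ => x^2) (2*x) x := by simpa using hasDerivAt_pow 2 x
  have h1 : HasDerivAt (fun x : ℝ => x) 1 x := hasDerivAt_id' (x := x)
  have hA : HasDerivAt (fun x : ℝ => 6*x^2 - 6*x) (6*(2*x) - 6*1) x :=
    (h2.const_mul 6).sub (h1.const_mul 6)
  have hB : HasDerivAt (fun x : ℝ => 3*x^2 - 4*x + 1) (3*(2*x) - 4*1) x :=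
    ((h2.const_mul 3).sub (h1.const_mul 4)).add_const 1
  have := (hA.const_mul (w-1)).add (hB.const_mul z)
  exact this.congr_deriv (by ring)


/-- For `0 < k < k₀`, `G^k(w,z) → 0` as `(w,z) → (1,0)`. -/
theorem Gk_tendsto_zero
    (W : ℝ → ℝ) (hWcont : Continuous W) (hWnonneg : ∀ s, 0 ≤ W s)
    (hWzero : ∀ s, W s = 0 ↔ s = 1 ∨ s = -1)
    (c : ℝ) (hc : 0 < c)
    (hWgp : ∀ s, 0 ≤ s → c * (s - 1) ^ 2 ≤ W s)
    (hWgn : ∀ s, s ≤ 0 → c * (s + 1) ^ 2 ≤ W s)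
    (k₀ : ℝ) (hk₀pos : 0 < k₀)
    (hk₀ : ∀ a b : ℝ, a < b → ∀ u u' u'' : ℝ → ℝ, W22On u u' u'' a b →
      k₀ * ∫ x in a..b, (u' x) ^ 2 ≤
        ((b - a) ^ 2)⁻¹ * (∫ x in a..b, W (u x)) +
          (b - a) ^ 2 * ∫ x in a..b, (u'' x) ^ 2)
    (k : ℝ) (hkpos : 0 < k) (hk : k < k₀) :
    Filter.Tendsto (fun p : ℝ × ℝ => Gk W k p.1 p.2)
      (nhds ((1 : ℝ), (0 : ℝ))) (nhds 0) := by
  -- the admissible set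
  set S : ℝ → ℝ → Set ℝ := fun w z => {r : ℝ | ∃ g g' g'' : ℝ → ℝ,
    (∀ x ∈ Set.Icc (0 : ℝ) 1, HasDerivWithinAt g (g' x) (Set.Icc (0 : ℝ) 1) x) ∧
    (∀ x ∈ Set.Icc (0 : ℝ) 1, HasDerivWithinAt g' (g'' x) (Set.Icc (0 : ℝ) 1) x) ∧
    ContinuousOn g'' (Set.Icc (0 : ℝ) 1) ∧
    g 0 = w ∧ g 1 = 1 ∧ g' 0 = z ∧ g' 1 = 0 ∧
    r = ∫ x in (0 : ℝ)..1, (W (g x) - k * (g' x) ^ 2 + (g'' x) ^ 2)} with hS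
  have hGk : ∀ w z, Gk W k w z = sInf (S w z) := fun w z => rfl
  -- every element of S is nonnegative
  have hlb : ∀ w z : ℝ, ∀ r ∈ S w z, (0:ℝ) ≤ r := by
    intro w z r hr
    obtain ⟨g, g', g'', hg, hg', hg''c, -, -, -, -, hr⟩ := hr
    have hgc : ContinuousOn g (Set.Icc (0:ℝ) 1) := fun x hx => (hg x hx).continuousWithinAt
    have hg'c : ContinuousOn g' (Set.Icc (0:ℝ) 1) := fun x hx => (hg' x hx).continuousWithinAt
    have huIcc : Set.uIcc (0:ℝ) 1 = Set.Icc (0:ℝ) 1 := Set.uIcc_of_le zero_le_one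
    have intA : IntervalIntegrable (fun x => W (g x)) volume 0 1 := by
      apply ContinuousOn.intervalIntegrable; rw [huIcc]; exact hWcont.comp_continuousOn hgc
    have intB : IntervalIntegrable (fun x => (g' x) ^ 2) volume 0 1 := by
      apply ContinuousOn.intervalIntegrable; rw [huIcc]; exact hg'c.pow 2
    have intC : IntervalIntegrable (fun x => (g'' x) ^ 2) volume 0 1 := by
      apply ContinuousOn.intervalIntegrable; rw [huIcc]; exact hg''c.pow 2
    have hW22 : W22On g g' g'' 0 1 := by
      refine ⟨hg, hg'c, hg''c.integrableOn_Icc, (hg''c.pow 2).integrableOn_Icc, ?_⟩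
      intro x hx
      have hftc : ∫ t in (0:ℝ)..x, g'' t = g' x - g' 0 := by
        apply intervalIntegral.integral_eq_sub_of_hasDeriv_right_of_le hx.1
        · exact hg'c.mono (Set.Icc_subset_Icc le_rfl hx.2)
        · intro t ht
          have ht1 : t ∈ Set.Ioo (0:ℝ) 1 := ⟨ht.1, lt_of_lt_of_le ht.2 hx.2⟩
          have : HasDerivAt g' (g'' t) t :=
            (hg' t (Set.mem_Icc_of_Ioo ht1)).hasDerivAt
              (Icc_mem_nhds ht1.1 ht1.2)
          exact this.hasDerivWithinAt
        · apply ContinuousOn.intervalIntegrable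
          exact hg''c.mono (by rw [Set.uIcc_of_le hx.1]; exact Set.Icc_subset_Icc le_rfl hx.2)
      rw [hftc]; ring
    have hineq := hk₀ 0 1 zero_lt_one g g' g'' hW22
    norm_num at hineq
    have hA : 0 ≤ ∫ x in (0:ℝ)..1, W (g x) :=
      intervalIntegral.integral_nonneg zero_le_one (fun x _ => hWnonneg _)
    have hB : 0 ≤ ∫ x in (0:ℝ)..1, (g' x) ^ 2 :=
      intervalIntegral.integral_nonneg zero_le_one (fun x _ => sq_nonneg _)
    have hC : 0 ≤ ∫ x in (0:ℝ)..1, (g'' x) ^ 2 :=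
      intervalIntegral.integral_nonneg zero_le_one (fun x _ => sq_nonneg _)
    have hr' : r = (∫ x in (0:ℝ)..1, W (g x)) - k * (∫ x in (0:ℝ)..1, (g' x) ^ 2)
        + ∫ x in (0:ℝ)..1, (g'' x) ^ 2 := by
      rw [hr, intervalIntegral.integral_add (intA.sub (intB.const_mul k)) intC,
        intervalIntegral.integral_sub intA (intB.const_mul k),
        intervalIntegral.integral_const_mul]
    have hkB : k * (∫ x in (0:ℝ)..1, (g' x) ^ 2) ≤ k₀ * (∫ x in (0:ℝ)..1, (g' x) ^ 2) :=
      mul_le_mul_of_nonneg_right hk.le hB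
    linarith
  -- the test function shows `Eg W k (w,z) ∈ S w z`
  have hmem : ∀ w z : ℝ, Eg W k (w, z) ∈ S w z := by
    intro w z
    refine ⟨fun x => 1 + (w - 1) * (2*x^3 - 3*x^2 + 1) + z * (x^3 - 2*x^2 + x),
      fun x => (w - 1) * (6*x^2 - 6*x) + z * (3*x^2 - 4*x + 1),
      fun x => (w - 1) * (12*x - 6) + z * (6*x - 4),
      fun x _ => (hasDerivAt_gaux w z x).hasDerivWithinAt,
      fun x _ => (hasDerivAt_gaux' w z x).hasDerivWithinAt,
      by fun_prop, by norm_num, by norm_num, by norm_num, by norm_num, rfl⟩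
  -- squeeze
  have hsq1 : ∀ p : ℝ × ℝ, 0 ≤ Gk W k p.1 p.2 := by
    intro p
    rw [hGk]
    exact le_csInf ⟨_, hmem p.1 p.2⟩ (hlb p.1 p.2)
  have hsq2 : ∀ p : ℝ × ℝ, Gk W k p.1 p.2 ≤ Eg W k p := by
    intro p
    rw [hGk]
    exact csInf_le ⟨0, hlb p.1 p.2⟩ (by simpa using hmem p.1 p.2)
  have hEg0 : Eg W k (1, 0) = 0 := by
    have hW1 : W 1 = 0 := (hWzero 1).2 (Or.inl rfl)
    simp [Eg, hW1]
  have hEtendsto : Filter.Tendsto (Eg W k) (nhds ((1:ℝ), (0:ℝ))) (nhds 0) := by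
    have := (Eg_cont W hWcont k).tendsto ((1:ℝ), (0:ℝ))
    rwa [hEg0] at this
  exact squeeze_zero hsq1 hsq2 hEtendsto
end

section
/- Let k₀ > 0 be the constant from the nonlinear interpolation inequality for W and let 0 < k < k₀. Let I ⊂ ℝ be an open bounded interval, ε_j → 0⁺, and (u_j) ⊂ W^{2,2}(I) with sup_j F^k_{ε_j}(u_j, I) < +∞ and u_j → u in L¹(I) for some u ∈ L¹(I). Then ε_j u_j' → 0 in L¹(I). -/
open MeasureTheory intervalIntegral Filter

lemma W22On.restrict {u u' u'' : ℝ → ℝ} {α β a b : ℝ} (h : W22On u u' u'' α β)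
    (hαa : α ≤ a) (hbβ : b ≤ β) : W22On u u' u'' a b := by
  obtain ⟨h1, h2, h3, h4, h5⟩ := h
  have hsub : Set.Icc a b ⊆ Set.Icc α β := Set.Icc_subset_Icc hαa hbβ
  refine ⟨fun x hx => (h1 x (hsub hx)).mono hsub, h2.mono hsub, h3.mono_set hsub,
    h4.mono_set hsub, ?_⟩
  intro x hx
  have hx' := hsub hx
  have hab : a ≤ b := hx.1.trans hx.2
  have haI : a ∈ Set.Icc α β := ⟨hαa, hab.trans hbβ⟩
  have hia : IntervalIntegrable u'' volume α a := by
    refine (h3.mono_set ?_).intervalIntegrable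
    rw [Set.uIcc_of_le hαa]; exact Set.Icc_subset_Icc le_rfl (hab.trans hbβ)
  have hix : IntervalIntegrable u'' volume a x := by
    refine (h3.mono_set ?_).intervalIntegrable
    rw [Set.uIcc_of_le hx.1]; exact Set.Icc_subset_Icc hαa hx'.2
  have hadd := intervalIntegral.integral_add_adjacent_intervals hia hix
  rw [h5 x hx', h5 a haI, ← hadd]
  ring

lemma W22On.contOn {u u' u'' : ℝ → ℝ} {α β : ℝ} (h : W22On u u' u'' α β) :
    ContinuousOn u (Set.Icc α β) :=
  fun x hx => (h.1 x hx).continuousWithinAt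

lemma partition_bound (W : ℝ → ℝ) (hWcont : Continuous W)
    (k₀ : ℝ)
    (hk₀ : ∀ a b : ℝ, a < b → ∀ u u' u'' : ℝ → ℝ, W22On u u' u'' a b →
      k₀ * ∫ x in a..b, (u' x) ^ 2 ≤
        ((b - a) ^ 2)⁻¹ * (∫ x in a..b, W (u x)) +
          (b - a) ^ 2 * ∫ x in a..b, (u'' x) ^ 2)
    (α β : ℝ) (hαβ : α < β) (u u' u'' : ℝ → ℝ) (h : W22On u u' u'' α β)
    (N : ℕ) (hN : 0 < N) :
    k₀ * ∫ x in α..β, (u' x) ^ 2 ≤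
      (((β - α) / N) ^ 2)⁻¹ * (∫ x in α..β, W (u x)) +
        ((β - α) / N) ^ 2 * ∫ x in α..β, (u'' x) ^ 2 := by
  set L : ℝ := (β - α) / N with hLdef
  have hNR : (0:ℝ) < N := by exact_mod_cast hN
  have hL : 0 < L := div_pos (sub_pos.2 hαβ) hNR
  set a : ℕ → ℝ := fun i => α + i * L with ha
  have ha0 : a 0 = α := by simp [ha]
  have haN : a N = β := by
    simp only [ha, hLdef]
    field_simp
    ring
  have hmono : ∀ i : ℕ, a i < a (i + 1) := by
    intro i
    simp only [ha]
    push_cast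
    nlinarith [hL]
  have hle : ∀ i : ℕ, a i ≤ a (i + 1) := fun i => (hmono i).le
  have hsub : ∀ i : ℕ, i < N → Set.Icc (a i) (a (i + 1)) ⊆ Set.Icc α β := by
    intro i hi
    apply Set.Icc_subset_Icc
    · simp only [ha]
      have : (0:ℝ) ≤ (i:ℝ) * L := by positivity
      linarith
    · simp only [ha]
      have : ((i:ℝ) + 1) * L ≤ N * L := by
        apply mul_le_mul_of_nonneg_right _ hL.le
        exact_mod_cast hi
      have hNL : (N:ℝ) * L = β - α := by rw [hLdef]; field_simp
      push_cast
      linarith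
  have hucont : ContinuousOn u (Set.Icc α β) := h.contOn
  have hWu : ContinuousOn (fun x => W (u x)) (Set.Icc α β) := hWcont.comp_continuousOn hucont
  have hu'sq : ContinuousOn (fun x => (u' x) ^ 2) (Set.Icc α β) := h.2.1.pow 2
  have hintW : ∀ i < N, IntervalIntegrable (fun x => W (u x)) volume (a i) (a (i+1)) := by
    intro i hi
    exact (hWu.mono (by rw [Set.uIcc_of_le (hle i)]; exact hsub i hi)).intervalIntegrable
  have hintP : ∀ i < N, IntervalIntegrable (fun x => (u' x) ^ 2) volume (a i) (a (i+1)) := by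
    intro i hi
    exact (hu'sq.mono (by rw [Set.uIcc_of_le (hle i)]; exact hsub i hi)).intervalIntegrable
  have hintB : ∀ i < N, IntervalIntegrable (fun x => (u'' x) ^ 2) volume (a i) (a (i+1)) := by
    intro i hi
    refine (h.2.2.2.1.mono_set ?_).intervalIntegrable
    rw [Set.uIcc_of_le (hle i)]; exact hsub i hi
  have hsumP := intervalIntegral.sum_integral_adjacent_intervals (μ := volume) (a := a)
      (n := N) hintP
  have hsumW := intervalIntegral.sum_integral_adjacent_intervals (μ := volume) (a := a)
      (n := N) hintW
  have hsumB := intervalIntegral.sum_integral_adjacent_intervals (μ := volume) (a := a)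
      (n := N) hintB
  rw [ha0, haN] at hsumP hsumW hsumB
  have hstep : ∀ i ∈ Finset.range N,
      k₀ * ∫ x in a i..a (i+1), (u' x) ^ 2 ≤
        (L ^ 2)⁻¹ * (∫ x in a i..a (i+1), W (u x)) +
          L ^ 2 * ∫ x in a i..a (i+1), (u'' x) ^ 2 := by
    intro i hi
    have hi' := Finset.mem_range.1 hi
    have hdiff : a (i+1) - a i = L := by simp only [ha]; push_cast; ring
    have hres : W22On u u' u'' (a i) (a (i+1)) :=
      h.restrict (hsub i hi' (Set.left_mem_Icc.2 (hle i))).1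
        (hsub i hi' (Set.right_mem_Icc.2 (hle i))).2
    have := hk₀ (a i) (a (i+1)) (hmono i) u u' u'' hres
    rwa [hdiff] at this
  calc k₀ * ∫ x in α..β, (u' x) ^ 2
      = ∑ i ∈ Finset.range N, k₀ * ∫ x in a i..a (i+1), (u' x) ^ 2 := by
        rw [← Finset.mul_sum, hsumP]
    _ ≤ ∑ i ∈ Finset.range N, ((L ^ 2)⁻¹ * (∫ x in a i..a (i+1), W (u x)) +
          L ^ 2 * ∫ x in a i..a (i+1), (u'' x) ^ 2) := Finset.sum_le_sum hstep
    _ = (L ^ 2)⁻¹ * (∫ x in α..β, W (u x)) + L ^ 2 * ∫ x in α..β, (u'' x) ^ 2 := by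
        rw [Finset.sum_add_distrib, ← Finset.mul_sum, ← Finset.mul_sum, hsumW, hsumB]

set_option maxHeartbeats 2000000 in
/-- For `0 < k < k₀`, if `(u_j) ⊂ W^{2,2}((α,β))` has equibounded energies
`F^k_{ε_j}(u_j)` with `ε_j → 0⁺` and `u_j → v` in `L¹`, then `ε_j u_j' → 0` in `L¹`. -/
theorem eps_deriv_tendsto_zero
    (W : ℝ → ℝ) (hWcont : Continuous W) (hWnonneg : ∀ s, 0 ≤ W s)
    (hWzero : ∀ s, W s = 0 ↔ s = 1 ∨ s = -1)
    (c : ℝ) (hc : 0 < c)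
    (hWgp : ∀ s, 0 ≤ s → c * (s - 1) ^ 2 ≤ W s)
    (hWgn : ∀ s, s ≤ 0 → c * (s + 1) ^ 2 ≤ W s)
    (k₀ : ℝ) (hk₀pos : 0 < k₀)
    (hk₀ : ∀ a b : ℝ, a < b → ∀ u u' u'' : ℝ → ℝ, W22On u u' u'' a b →
      k₀ * ∫ x in a..b, (u' x) ^ 2 ≤
        ((b - a) ^ 2)⁻¹ * (∫ x in a..b, W (u x)) +
          (b - a) ^ 2 * ∫ x in a..b, (u'' x) ^ 2)
    (k : ℝ) (hkpos : 0 < k) (hk : k < k₀)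
    (α β : ℝ) (hαβ : α < β)
    (ε : ℕ → ℝ) (hεpos : ∀ j, 0 < ε j) (hεlim : Tendsto ε atTop (nhds 0))
    (u u' u'' : ℕ → ℝ → ℝ) (hu : ∀ j, W22On (u j) (u' j) (u'' j) α β)
    (M : ℝ)
    (hM : ∀ j, (∫ x in α..β,
        (W (u j x) / ε j - k * ε j * (u' j x) ^ 2 + (ε j) ^ 3 * (u'' j x) ^ 2)) ≤ M)
    (v : ℝ → ℝ) (hv : MeasureTheory.IntegrableOn v (Set.Ioo α β))
    (hconv : Tendsto (fun j => ∫ x in α..β, |u j x - v x|) atTop (nhds 0)) :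
    Tendsto (fun j => ∫ x in α..β, |ε j * u' j x|) atTop (nhds 0) := by
  have hd : (0:ℝ) < β - α := sub_pos.2 hαβ
  obtain ⟨C, hCdef⟩ : ∃ t : ℝ, t = 4 * |M| / (k₀ - k) := ⟨_, rfl⟩
  have hC0 : 0 ≤ C := by
    rw [hCdef]
    have : 0 < k₀ - k := by linarith
    positivity
  -- basic integrability facts
  have hucont : ∀ j, ContinuousOn (u j) (Set.Icc α β) := fun j => (hu j).contOn
  have hWint : ∀ j, IntervalIntegrable (fun x => W (u j x)) volume α β := fun j =>
    (hWcont.comp_continuousOn (hucont j)).intervalIntegrable_of_Icc hαβ.le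
  have hu'sqint : ∀ j, IntervalIntegrable (fun x => (u' j x) ^ 2) volume α β := fun j =>
    ((hu j).2.1.pow 2).intervalIntegrable_of_Icc hαβ.le
  have hu''sqint : ∀ j, IntervalIntegrable (fun x => (u'' j x) ^ 2) volume α β := fun j =>
    ((hu j).2.2.2.1.mono_set (Set.uIcc_of_le hαβ.le).subset).intervalIntegrable
  -- nonnegativity of the three integrals
  have hIW : ∀ j, 0 ≤ ∫ x in α..β, W (u j x) := fun j =>
    intervalIntegral.integral_nonneg hαβ.le (fun x _ => hWnonneg _)
  have hIP : ∀ j, 0 ≤ ∫ x in α..β, (u' j x) ^ 2 := fun j =>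
    intervalIntegral.integral_nonneg hαβ.le (fun x _ => sq_nonneg _)
  have hIB : ∀ j, 0 ≤ ∫ x in α..β, (u'' j x) ^ 2 := fun j =>
    intervalIntegral.integral_nonneg hαβ.le (fun x _ => sq_nonneg _)
  -- energy splitting
  have henergy : ∀ j, (ε j)⁻¹ * (∫ x in α..β, W (u j x))
      + (ε j) ^ 3 * (∫ x in α..β, (u'' j x) ^ 2)
      ≤ M + k * ε j * ∫ x in α..β, (u' j x) ^ 2 := by
    intro j
    have e1 : IntervalIntegrable (fun x => W (u j x) / ε j) volume α β :=
      (hWint j).div_const _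
    have e2 : IntervalIntegrable (fun x => k * ε j * (u' j x) ^ 2) volume α β :=
      (hu'sqint j).const_mul _
    have e3 : IntervalIntegrable (fun x => (ε j) ^ 3 * (u'' j x) ^ 2) volume α β :=
      (hu''sqint j).const_mul _
    have hsplit : (∫ x in α..β,
        (W (u j x) / ε j - k * ε j * (u' j x) ^ 2 + (ε j) ^ 3 * (u'' j x) ^ 2))
        = (∫ x in α..β, W (u j x)) / ε j - k * ε j * (∫ x in α..β, (u' j x) ^ 2)
          + (ε j) ^ 3 * (∫ x in α..β, (u'' j x) ^ 2) := by
      rw [intervalIntegral.integral_add (e1.sub e2) e3, intervalIntegral.integral_sub e1 e2,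
        intervalIntegral.integral_div, intervalIntegral.integral_const_mul,
        intervalIntegral.integral_const_mul]
    have h1 := hM j
    rw [hsplit] at h1
    rw [inv_mul_eq_div]
    linarith
  -- the scale parameter ρ
  obtain ⟨ρ, hρdef⟩ : ∃ t : ℝ, t = min 2 ((k₀ + k) / (2 * k)) := ⟨_, rfl⟩
  have hρ1 : 1 < ρ := by
    rw [hρdef]
    apply lt_min (by norm_num)
    rw [lt_div_iff₀ (by linarith)]
    linarith
  have hρ2 : ρ ≤ 2 := hρdef ▸ min_le_left _ _
  have hρk : ρ * k ≤ (k₀ + k) / 2 := by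
    have h1 : ρ ≤ (k₀ + k) / (2 * k) := hρdef ▸ min_le_right _ _
    calc ρ * k ≤ ((k₀ + k) / (2 * k)) * k := by nlinarith
      _ = (k₀ + k) / 2 := by field_simp
  obtain ⟨t₀, ht₀def⟩ : ∃ t : ℝ, t = Real.sqrt ρ - 1 := ⟨_, rfl⟩
  have hsρ : 1 < Real.sqrt ρ := by
    have h1 : Real.sqrt 1 < Real.sqrt ρ := Real.sqrt_lt_sqrt (by norm_num) hρ1
    simpa using h1
  have ht₀ : 0 < t₀ := by rw [ht₀def]; linarith
  -- eventually  ε j * ∫ (u' j)² ≤ C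
  have hPev : ∀ᶠ j in atTop, ε j * (∫ x in α..β, (u' j x) ^ 2) ≤ C := by
    have hsmall : ∀ᶠ j in atTop, ε j < (β - α) * t₀ :=
      hεlim.eventually_lt_const (by positivity)
    filter_upwards [hsmall] with j hj
    have he : 0 < ε j := hεpos j
    obtain ⟨N, hNdef⟩ : ∃ n : ℕ, n = ⌈(β - α) / ε j⌉₊ := ⟨_, rfl⟩
    have hN : 0 < N := by rw [hNdef]; exact Nat.ceil_pos.2 (div_pos hd he)
    have hNR : (0:ℝ) < N := by exact_mod_cast hN
    obtain ⟨L, hLdef⟩ : ∃ t : ℝ, t = (β - α) / N := ⟨_, rfl⟩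
    have hL : 0 < L := by rw [hLdef]; exact div_pos hd hNR
    have hLe : L ≤ ε j := by
      rw [hLdef, div_le_iff₀ hNR]
      have h1 : (β - α) / ε j ≤ (N : ℝ) := by rw [hNdef]; exact Nat.le_ceil _
      calc β - α = ((β - α) / ε j) * ε j := by field_simp
        _ ≤ (N:ℝ) * ε j := by nlinarith
        _ = ε j * N := by ring
    have hNup : (N:ℝ) < (β - α) / ε j + 1 := by
      rw [hNdef]
      exact Nat.ceil_lt_add_one (by positivity)
    have heL : ε j < L * Real.sqrt ρ := by
      have h1 : ε j * N < (β - α) + ε j := by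
        calc ε j * N < ε j * ((β - α) / ε j + 1) := by nlinarith
          _ = (β - α) + ε j := by field_simp
      have h2 : (β - α) + ε j < (β - α) * Real.sqrt ρ := by
        have h3 : (β - α) * (1 + t₀) = (β - α) * Real.sqrt ρ := by
          rw [ht₀def]; ring
        nlinarith
      have h3 : ε j * N < (β - α) * Real.sqrt ρ := h1.trans h2
      have h4 : L * N = β - α := by rw [hLdef]; field_simp
      nlinarith [Real.sqrt_nonneg ρ]
    have hratio : ε j * (L ^ 2)⁻¹ ≤ ρ * (ε j)⁻¹ := by
      rw [← div_eq_mul_inv, ← div_eq_mul_inv, div_le_div_iff₀ (by positivity) he]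
      have h2 : ε j * ε j ≤ (L * Real.sqrt ρ) * (L * Real.sqrt ρ) :=
        mul_le_mul heL.le heL.le he.le (by positivity)
      have h3 : (L * Real.sqrt ρ) * (L * Real.sqrt ρ) = ρ * L ^ 2 := by
        have h4 := Real.mul_self_sqrt (by linarith : (0:ℝ) ≤ ρ)
        calc (L * Real.sqrt ρ) * (L * Real.sqrt ρ)
            = (Real.sqrt ρ * Real.sqrt ρ) * L ^ 2 := by ring
          _ = ρ * L ^ 2 := by rw [h4]
      linarith
    have keyI := partition_bound W hWcont k₀ hk₀ α β hαβ (u j) (u' j) (u'' j) (hu j) N hN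
    rw [← hLdef] at keyI
    have hen := henergy j
    have hIWj := hIW j
    have hIPj := hIP j
    have hIBj := hIB j
    -- make the integrals opaque
    obtain ⟨IW, hIWg⟩ : ∃ t : ℝ, t = ∫ x in α..β, W (u j x) := ⟨_, rfl⟩
    obtain ⟨IB, hIBg⟩ : ∃ t : ℝ, t = ∫ x in α..β, (u'' j x) ^ 2 := ⟨_, rfl⟩
    obtain ⟨IP, hIPg⟩ : ∃ t : ℝ, t = ∫ x in α..β, (u' j x) ^ 2 := ⟨_, rfl⟩
    rw [← hIWg, ← hIBg, ← hIPg] at keyI hen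
    rw [← hIWg] at hIWj
    rw [← hIBg] at hIBj
    rw [← hIPg] at hIPj
    rw [← hIPg]
    -- chain of inequalities
    have s1 : k₀ * (ε j * IP) ≤ ε j * (L ^ 2)⁻¹ * IW + ε j * L ^ 2 * IB := by
      nlinarith [mul_le_mul_of_nonneg_left keyI he.le]
    have s2 : ε j * (L ^ 2)⁻¹ * IW ≤ ρ * (ε j)⁻¹ * IW :=
      mul_le_mul_of_nonneg_right hratio hIWj
    have s3 : ε j * L ^ 2 * IB ≤ (ε j) ^ 3 * IB := by
      have h1 : ε j * L ^ 2 ≤ (ε j) ^ 3 := by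
        nlinarith [mul_le_mul_of_nonneg_left (mul_le_mul hLe hLe hL.le he.le) he.le]
      exact mul_le_mul_of_nonneg_right h1 hIBj
    have s4 : ρ * (ε j)⁻¹ * IW + (ε j) ^ 3 * IB
        ≤ ρ * ((ε j)⁻¹ * IW + (ε j) ^ 3 * IB) := by
      nlinarith [mul_nonneg (pow_nonneg he.le 3) hIBj]
    have s5 : ρ * ((ε j)⁻¹ * IW + (ε j) ^ 3 * IB) ≤ ρ * (M + k * ε j * IP) :=
      mul_le_mul_of_nonneg_left hen (by linarith)
    have hρM : ρ * M ≤ 2 * |M| := by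
      rcases le_or_gt 0 M with h | h
      · nlinarith [le_abs_self M]
      · nlinarith [neg_abs_le M]
    have hρkP : ρ * (k * ε j * IP) ≤ (k₀ + k) / 2 * (ε j * IP) := by
      have hq : 0 ≤ ε j * IP := mul_nonneg he.le hIPj
      nlinarith [mul_le_mul_of_nonneg_right hρk hq]
    have hfin : (k₀ - k) * (ε j * IP) ≤ 4 * |M| := by
      nlinarith [s1, s2, s3, s4, s5, hρM, hρkP]
    rw [hCdef, le_div_iff₀ (by linarith : (0:ℝ) < k₀ - k)]
    nlinarith [hfin]
  -- conclusion via squeeze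
  have habs : ∀ j, IntervalIntegrable (fun x => |ε j * u' j x|) volume α β := fun j =>
    ((continuousOn_const.mul (hu j).2.1).abs).intervalIntegrable_of_Icc hαβ.le
  have hb : Tendsto (fun j => Real.sqrt (ε j) * ((β - α) + C) / 2) atTop (nhds 0) := by
    have h1 : Tendsto (fun j => Real.sqrt (ε j)) atTop (nhds 0) := by
      have h2 := (Real.continuous_sqrt.tendsto 0).comp hεlim
      simpa [Function.comp_def] using h2
    have h3 := (h1.mul_const ((β - α) + C)).div_const 2
    simpa using h3
  apply squeeze_zero' (Filter.Eventually.of_forall fun j =>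
    intervalIntegral.integral_nonneg hαβ.le fun x _ => abs_nonneg _) _ hb
  filter_upwards [hPev] with j hPj
  have he : 0 < ε j := hεpos j
  obtain ⟨d, hddef⟩ : ∃ t : ℝ, t = Real.sqrt (ε j) := ⟨_, rfl⟩
  have hd0 : 0 < d := by rw [hddef]; exact Real.sqrt_pos.2 he
  have hdd : d * d = ε j := by rw [hddef]; exact Real.mul_self_sqrt he.le
  have hpt : ∀ x ∈ Set.Icc α β, |ε j * u' j x| ≤ (ε j + (ε j * u' j x) ^ 2) / (2 * d) := by
    intro x _
    rw [le_div_iff₀ (by positivity)]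
    nlinarith [sq_nonneg (d - |ε j * u' j x|), sq_abs (ε j * u' j x),
      abs_nonneg (ε j * u' j x)]
  have hRint : IntervalIntegrable (fun x => (ε j + (ε j * u' j x) ^ 2) / (2 * d)) volume α β :=
    ((continuousOn_const.add ((continuousOn_const.mul (hu j).2.1).pow 2)).div_const
      _).intervalIntegrable_of_Icc hαβ.le
  have hmono := intervalIntegral.integral_mono_on hαβ.le (habs j) hRint hpt
  have hi2 : IntervalIntegrable (fun x => (ε j * u' j x) ^ 2) volume α β := by
    simp_rw [mul_pow]
    exact (hu'sqint j).const_mul _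
  have hcalc : (∫ x in α..β, (ε j + (ε j * u' j x) ^ 2) / (2 * d))
      = ((β - α) * ε j + (ε j) ^ 2 * ∫ x in α..β, (u' j x) ^ 2) / (2 * d) := by
    rw [intervalIntegral.integral_div]
    congr 1
    rw [intervalIntegral.integral_add intervalIntegrable_const hi2,
      intervalIntegral.integral_const]
    simp_rw [mul_pow]
    rw [intervalIntegral.integral_const_mul]
    simp [smul_eq_mul]
  rw [hcalc] at hmono
  refine hmono.trans ?_
  rw [hddef] at hd0 hdd hmono ⊢
  rw [div_le_div_iff₀ (by positivity) (by norm_num : (0:ℝ) < 2)]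
  have hq := mul_le_mul_of_nonneg_left hPj he.le
  nlinarith [hq, hIP j, hd0, hdd]
end
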